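/- arXiv:1708.02939 — 4 statements merged into one kernel-verified Lean document; each statement's English description precedes it below -/
import Mathlib

section
/- Let g : ℝ → [0,∞) be a convex, differentiable, nonnegative function whose derivative g′ satisfies |g′(s) − g′(s̃)| ≤ L|s − s̃|^α for all s, s̃ ∈ ℝ, where α ∈ (0,1] and L > 0. Then for every s ∈ ℝ, |g′(s)|² ≤ A·g(s) + B, where A = 2 α^{(1−α)/(1+α)} L^{2/(1+α)} (1+α) and B = α^{−2α/(1+α)} L^{2/(1+α)} (1 − α²). -/
lemma cont_of_holder (g' : ℝ → ℝ) (L α : ℝ) (hL : 0 < L) (hα : 0 < α)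
    (h : ∀ s t, |g' s - g' t| ≤ L * |s - t| ^ α) : Continuous g' := by
  rw [Metric.continuous_iff]
  intro b ε hε
  refine ⟨(ε / L) ^ (1/α), by positivity, fun a hab => ?_⟩
  have h1 : |g' a - g' b| ≤ L * |a - b| ^ α := h a b
  have h2 : |a - b| ^ α < ((ε / L) ^ (1/α)) ^ α := by
    apply Real.rpow_lt_rpow (abs_nonneg _) _ hα
    simpa [Real.dist_eq] using hab
  rw [one_div, Real.rpow_inv_rpow (by positivity) (ne_of_gt hα)] at h2
  calc dist (g' a) (g' b) = |g' a - g' b| := Real.dist_eq _ _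
    _ ≤ L * |a - b| ^ α := h1
    _ < L * (ε / L) := by nlinarith
    _ = ε := by field_simp

lemma taylor_bound (g g' : ℝ → ℝ) (L α : ℝ) (hL : 0 < L) (hα : 0 < α)
    (hcont : Continuous g')
    (hderiv : ∀ s, HasDerivAt g (g' s) s)
    (hholder : ∀ s t : ℝ, |g' s - g' t| ≤ L * |s - t| ^ α) (s t : ℝ) :
    g (s + t) ≤ g s + g' s * t + L * |t| ^ (1 + α) / (1 + α) := by
  have hF : ∀ τ ∈ Set.uIcc (0:ℝ) 1, HasDerivAt (fun τ : ℝ => g (s + τ * t)) (g' (s + τ * t) * t) τ := by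
    intro τ _
    have haff : HasDerivAt (fun τ : ℝ => s + τ * t) t τ := by
      simpa using ((hasDerivAt_id τ).mul_const t).const_add s
    exact (hderiv (s + τ * t)).comp τ haff
  have hcont2 : Continuous fun τ : ℝ => g' (s + τ * t) * t :=
    (hcont.comp (by continuity)).mul continuous_const
  have hFTC : ∫ τ in (0:ℝ)..1, g' (s + τ * t) * t = g (s + 1 * t) - g (s + 0 * t) :=
    intervalIntegral.integral_eq_sub_of_hasDerivAt hF (hcont2.intervalIntegrable 0 1)
  have hle : ∫ τ in (0:ℝ)..1, g' (s + τ * t) * t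
      ≤ ∫ τ in (0:ℝ)..1, (g' s * t + L * (|t| ^ α * |t|) * τ ^ α) := by
    apply intervalIntegral.integral_mono_on (by norm_num) (hcont2.intervalIntegrable 0 1)
    · exact (intervalIntegrable_const.add
        (((intervalIntegral.intervalIntegrable_rpow (Or.inl hα.le)).const_mul _)))
    · intro τ hτ
      have h1 : g' (s + τ * t) * t - g' s * t ≤ L * (|t| ^ α * |t|) * τ ^ α := by
        have h2 : (g' (s + τ * t) - g' s) * t ≤ |g' (s + τ * t) - g' s| * |t| := by
          calc (g' (s + τ * t) - g' s) * t ≤ |(g' (s + τ * t) - g' s) * t| := le_abs_self _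
            _ = |g' (s + τ * t) - g' s| * |t| := abs_mul _ _
        have h3 : |g' (s + τ * t) - g' s| ≤ L * |τ * t| ^ α := by
          simpa using hholder (s + τ * t) s
        have h4 : |τ * t| ^ α = τ ^ α * |t| ^ α := by
          rw [abs_mul, Real.mul_rpow (abs_nonneg _) (abs_nonneg _), abs_of_nonneg hτ.1]
        calc g' (s + τ * t) * t - g' s * t = (g' (s + τ * t) - g' s) * t := by ring
          _ ≤ |g' (s + τ * t) - g' s| * |t| := h2
          _ ≤ (L * |τ * t| ^ α) * |t| := mul_le_mul_of_nonneg_right h3 (abs_nonneg t)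
          _ = L * (|t| ^ α * |t|) * τ ^ α := by rw [h4]; ring
      linarith
  have hval : ∫ τ in (0:ℝ)..1, (g' s * t + L * (|t| ^ α * |t|) * τ ^ α)
      = g' s * t + L * (|t| ^ α * |t|) / (α + 1) := by
    rw [intervalIntegral.integral_add intervalIntegrable_const
      ((intervalIntegral.intervalIntegrable_rpow (Or.inl hα.le)).const_mul _),
      intervalIntegral.integral_const, intervalIntegral.integral_const_mul,
      integral_rpow (Or.inl (by linarith))]
    simp [Real.one_rpow, Real.zero_rpow (by linarith : α + 1 ≠ 0)]
    ring
  have habs : |t| ^ (1 + α) = |t| ^ α * |t| := by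
    rw [add_comm, Real.rpow_add' (abs_nonneg t) (by linarith), Real.rpow_one]
  rw [hFTC] at hle
  rw [hval] at hle
  rw [habs]
  have : (1:ℝ) + α = α + 1 := by ring
  rw [this]
  simp only [one_mul, zero_mul, add_zero] at hle
  linarith

lemma key_ineq (g g' : ℝ → ℝ) (L α : ℝ) (hL : 0 < L) (hα : 0 < α)
    (hnonneg : ∀ s, 0 ≤ g s)
    (htaylor : ∀ s t : ℝ, g (s + t) ≤ g s + g' s * t + L * |t| ^ (1 + α) / (1 + α))
    (s r : ℝ) (hr : 0 < r) :
    |g' s| * r ≤ g s + L * r ^ (1 + α) / (1 + α) := by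
  set t : ℝ := if 0 ≤ g' s then -r else r with ht
  have habs : |t| = r := by
    rcases le_or_gt 0 (g' s) with h | h
    · simp [ht, h, abs_of_nonneg hr.le]
    · simp [ht, not_le.2 h, abs_of_nonneg hr.le]
  have hmul : g' s * t = -(|g' s| * r) := by
    rcases le_or_gt 0 (g' s) with h | h
    · simp [ht, h, abs_of_nonneg h]
    · simp [ht, not_le.2 h, abs_of_neg h]
  have h1 := htaylor s t
  have h2 := hnonneg (s + t)
  rw [habs, hmul] at h1
  linarith

/-- Self-bounding property: if `g : ℝ → [0,∞)` is convex, differentiable and nonnegative with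
`(α, L)`-Hölder continuous derivative, then `|g′(s)|² ≤ A g(s) + B` with
`A = 2 α^{(1-α)/(1+α)} L^{2/(1+α)} (1+α)` and `B = α^{-2α/(1+α)} L^{2/(1+α)} (1-α²)`. -/
theorem self_bounding_of_holder_derivative
    (g g' : ℝ → ℝ) (L α : ℝ) (hL : 0 < L) (hα : α ∈ Set.Ioc (0 : ℝ) 1)
    (hnonneg : ∀ s, 0 ≤ g s) (hconv : ConvexOn ℝ Set.univ g)
    (hderiv : ∀ s, HasDerivAt g (g' s) s)
    (hholder : ∀ s t : ℝ, |g' s - g' t| ≤ L * |s - t| ^ α) :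
    ∀ s : ℝ,
      |g' s| ^ 2 ≤ 2 * α ^ ((1 - α) / (1 + α)) * L ^ (2 / (1 + α)) * (1 + α) * g s
        + α ^ (-(2 * α) / (1 + α)) * L ^ (2 / (1 + α)) * (1 - α ^ 2) := by
  obtain ⟨hα0, hα1⟩ := hα
  intro s
  have hcont : Continuous g' := cont_of_holder g' L α hL hα0 hholder
  have htaylor := taylor_bound g g' L α hL hα0 hcont hderiv hholder
  have key : ∀ r : ℝ, 0 < r → |g' s| * r ≤ g s + L * r ^ (1 + α) / (1 + α) :=
    fun r hr => key_ineq g g' L α hL hα0 hnonneg (htaylor) s r hr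
  set m : ℝ := |g' s| with hm
  set G : ℝ := g s with hG
  have hm0 : 0 ≤ m := abs_nonneg _
  have hG0 : 0 ≤ G := hnonneg s
  have hβ : (0:ℝ) < 1 + α := by linarith
  have h1mα' : (1:ℝ) + α ≠ 0 := hβ.ne'
  -- case m = 0
  rcases eq_or_lt_of_le hm0 with hm0' | hmpos
  · rw [← hm0']
    have hA : 0 ≤ 2 * α ^ ((1 - α) / (1 + α)) * L ^ (2 / (1 + α)) * (1 + α) * G := by
      have := Real.rpow_nonneg hα0.le ((1 - α) / (1 + α))
      have := Real.rpow_nonneg hL.le (2 / (1 + α))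
      positivity
    have hB : 0 ≤ α ^ (-(2 * α) / (1 + α)) * L ^ (2 / (1 + α)) * (1 - α ^ 2) := by
      have h1 := Real.rpow_nonneg hα0.le (-(2 * α) / (1 + α))
      have h2 := Real.rpow_nonneg hL.le (2 / (1 + α))
      have h3 : 0 ≤ 1 - α ^ 2 := by nlinarith
      positivity
    norm_num
    linarith
  -- now m > 0 ; show G > 0
  have hGpos : 0 < G := by
    rcases eq_or_lt_of_le hG0 with hG0' | h
    · exfalso
      set r₀ : ℝ := (m * (1 + α) / (2 * L)) ^ (1/α) with hr₀
      have hr₀pos : 0 < r₀ := by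
        apply Real.rpow_pos_of_pos; positivity
      have hr₀α : r₀ ^ α = m * (1 + α) / (2 * L) := by
        rw [hr₀, one_div, Real.rpow_inv_rpow (by positivity) (ne_of_gt hα0)]
      have h1 := key r₀ hr₀pos
      have h2 : r₀ ^ (1 + α) = r₀ ^ α * r₀ := by
        rw [add_comm, Real.rpow_add' hr₀pos.le (by linarith), Real.rpow_one]
      rw [h2, hr₀α, ← hG0'] at h1
      have : m * r₀ ≤ (m / 2) * r₀ := by
        calc m * r₀ ≤ 0 + L * (m * (1 + α) / (2 * L) * r₀) / (1 + α) := h1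
          _ = (m / 2) * r₀ := by field_simp; ring
      nlinarith
    · exact h
  rcases eq_or_lt_of_le hα1 with hαe | halt
  -- case α = 1
  · subst hαe
    have h := key (m / L) (by positivity)
    have hexp : ((1:ℝ) + 1) = ((2:ℕ):ℝ) := by norm_num
    rw [hexp, Real.rpow_natCast] at h
    have h2 : m ^ 2 ≤ 2 * L * G := by
      have hL' : L ≠ 0 := hL.ne'
      field_simp at h
      push_cast at h
      nlinarith [mul_pos hL hL, sq_nonneg m]
    have e1 : ((1:ℝ) - 1) / (1 + 1) = 0 := by norm_num
    have e2 : (2:ℝ) / (1 + 1) = 1 := by norm_num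
    have e3 : -(2 * (1:ℝ)) / (1 + 1) = -1 := by norm_num
    rw [e1, e2, e3, Real.one_rpow, Real.rpow_one]
    norm_num
    nlinarith [mul_nonneg hL.le hG0]
  -- case α < 1
  · have h1mα : (1:ℝ) - α ≠ 0 := by linarith
    have h1pα : (1:ℝ) + α ≠ 0 := by linarith
    set c : ℝ := (1 + α) / α with hc
    have hcpos : 0 < c := by positivity
    set r : ℝ := ((1 + α) * G / (L * α)) ^ (1 / (1 + α)) with hr
    have hrpos : 0 < r := Real.rpow_pos_of_pos (by positivity) _
    have hrβ : r ^ (1 + α) = (1 + α) * G / (L * α) := by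
      rw [hr, one_div, Real.rpow_inv_rpow (by positivity) (ne_of_gt hβ)]
    have h1 := key r hrpos
    rw [hrβ] at h1
    have h2 : m * r ≤ G * c := by
      have e : L * ((1 + α) * G / (L * α)) / (1 + α) = G / α := by field_simp
      rw [e] at h1
      calc m * r ≤ G + G / α := h1
        _ = G * c := by rw [hc]; field_simp; ring
    have h3 : m ≤ G * c / r := by rw [le_div_iff₀ hrpos]; exact h2
    have h4 : m ^ (1 + α) ≤ L * G ^ α * c ^ α := by
      calc m ^ (1 + α) ≤ (G * c / r) ^ (1 + α) := Real.rpow_le_rpow hm0 h3 hβ.le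
        _ = (G * c) ^ (1 + α) / r ^ (1 + α) := Real.div_rpow (by positivity) hrpos.le _
        _ = (G ^ (1+α) * c ^ (1+α)) * (L * α) / ((1 + α) * G) := by
            rw [hrβ, Real.mul_rpow hG0 hcpos.le]; field_simp
        _ = ((G ^ α * G) * (c ^ α * c)) * (L * α) / ((1 + α) * G) := by
            rw [← Real.rpow_add_one (ne_of_gt hGpos) α, ← Real.rpow_add_one (ne_of_gt hcpos) α,
              add_comm α 1]
        _ = L * G ^ α * c ^ α := by rw [hc]; field_simp
    set q : ℝ := 2 / (1 + α) with hq
    have hqpos : 0 < q := by positivity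
    set θ : ℝ := 2 * α / (1 + α) with hθ
    have hθpos : 0 < θ := by positivity
    have h1θ : 0 ≤ 1 - θ := by
      rw [hθ, sub_nonneg, div_le_one hβ]; linarith
    have h5 : (m:ℝ) ^ 2 ≤ L ^ q * G ^ θ * c ^ θ := by
      have e1 : (m:ℝ) ^ 2 = (m ^ (1 + α)) ^ q := by
        rw [← Real.rpow_natCast m 2, ← Real.rpow_mul hm0]
        congr 1
        rw [hq]; field_simp; norm_num
      rw [e1]
      calc (m ^ (1 + α)) ^ q ≤ (L * G ^ α * c ^ α) ^ q := by
            apply Real.rpow_le_rpow (Real.rpow_nonneg hm0 _) h4 hqpos.le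
        _ = L ^ q * (G ^ α) ^ q * (c ^ α) ^ q := by
            rw [Real.mul_rpow (by positivity) (by positivity),
              Real.mul_rpow hL.le (by positivity)]
        _ = L ^ q * G ^ θ * c ^ θ := by
            rw [← Real.rpow_mul hG0, ← Real.rpow_mul hcpos.le]
            congr 2 <;> (rw [hθ, hq]; ring)
    set y : ℝ := (1 + α) ^ (-2 / (1 - α)) with hy
    have hypos : 0 < y := Real.rpow_pos_of_pos hβ _
    have amgm : G ^ θ * y ^ (1 - θ) ≤ θ * G + (1 - θ) * y :=
      Real.geom_mean_le_arith_mean2_weighted hθpos.le h1θ hG0 hypos.le (by ring)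
    have hyy : y ^ (θ - 1) * y = y ^ θ := by
      nth_rewrite 2 [show θ = (θ - 1) + 1 by ring]
      rw [Real.rpow_add_one hypos.ne']
    have hGθ : G ^ θ = (G ^ θ * y ^ (1 - θ)) * y ^ (θ - 1) := by
      rw [mul_assoc, ← Real.rpow_add hypos]
      norm_num
    have step2 : m ^ 2 ≤ (L ^ q * c ^ θ * θ * y ^ (θ - 1)) * G + (L ^ q * c ^ θ * (1 - θ)) * y ^ θ := by
      have hKnn : 0 ≤ L ^ q * c ^ θ := by positivity
      calc (m:ℝ) ^ 2 ≤ L ^ q * G ^ θ * c ^ θ := h5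
        _ = (L ^ q * c ^ θ) * ((G ^ θ * y ^ (1 - θ)) * y ^ (θ - 1)) := by rw [← hGθ]; ring
        _ ≤ (L ^ q * c ^ θ) * ((θ * G + (1 - θ) * y) * y ^ (θ - 1)) := by
            apply mul_le_mul_of_nonneg_left _ hKnn
            exact mul_le_mul_of_nonneg_right amgm (Real.rpow_nonneg hypos.le _)
        _ = (L ^ q * c ^ θ * θ * y ^ (θ - 1)) * G + (L ^ q * c ^ θ * (1 - θ)) * (y ^ (θ - 1) * y) := by
            ring
        _ = (L ^ q * c ^ θ * θ * y ^ (θ - 1)) * G + (L ^ q * c ^ θ * (1 - θ)) * y ^ θ := by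
            rw [hyy]
    have hcθ : c ^ θ = (1 + α) ^ θ / α ^ θ := Real.div_rpow hβ.le hα0.le _
    have hX : (0:ℝ) < α ^ θ := Real.rpow_pos_of_pos hα0 _
    have hyθ1 : y ^ (θ - 1) = (1 + α) ^ (2 / (1 + α)) := by
      rw [hy, ← Real.rpow_mul hβ.le]
      congr 1
      rw [hθ]
      field_simp
      ring
    have hβpow : (1 + α) ^ θ * (1 + α) ^ (2 / (1 + α)) = (1 + α) * (1 + α) := by
      rw [← Real.rpow_add hβ, show θ + 2 / (1 + α) = 2 by rw [hθ]; field_simp; ring]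
      rw [show (2:ℝ) = ((2:ℕ):ℝ) by norm_num, Real.rpow_natCast]
      ring
    have hαθ : α ^ ((1 - α) / (1 + α)) * α ^ θ = α := by
      rw [← Real.rpow_add hα0, show (1 - α) / (1 + α) + θ = 1 by rw [hθ]; field_simp; ring]
      exact Real.rpow_one α
    have hθβ : θ * (1 + α) = 2 * α := by rw [hθ]; field_simp
    have hαdiv : α ^ ((1 - α) / (1 + α)) = α / α ^ θ := (eq_div_iff hX.ne').mpr hαθ
    have coefA : L ^ q * c ^ θ * θ * y ^ (θ - 1) = 2 * α ^ ((1 - α) / (1 + α)) * L ^ q * (1 + α) := by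
      rw [hαdiv, hcθ, hyθ1]
      field_simp [hX.ne']
      linear_combination θ * hβpow + (1 + α) * hθβ
    have coefB : L ^ q * c ^ θ * (1 - θ) * y ^ θ ≤ α ^ (-(2 * α) / (1 + α)) * L ^ q * (1 - α ^ 2) := by
      have hnegθ : α ^ (-(2 * α) / (1 + α)) = (α ^ θ)⁻¹ := by
        rw [show -(2 * α) / (1 + α) = -θ by rw [hθ]; ring, Real.rpow_neg hα0.le]
      have hyθ : y ^ θ = (1 + α) ^ (-2 / (1 - α) * θ) := by
        rw [hy, ← Real.rpow_mul hβ.le]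
      have hexp : θ + -2 / (1 - α) * θ ≤ 2 := by
        have hu1 : θ ≤ 2 := by rw [hθ, div_le_iff₀ hβ]; linarith
        have he0 : -2 / (1 - α) ≤ 0 :=
          div_nonpos_of_nonpos_of_nonneg (by norm_num) (by linarith)
        have := mul_nonpos_of_nonpos_of_nonneg he0 hθpos.le
        linarith
      have hmono : (1 + α) ^ (θ + -2 / (1 - α) * θ) ≤ (1 + α) * (1 + α) := by
        calc (1 + α) ^ (θ + -2 / (1 - α) * θ) ≤ (1 + α) ^ (2:ℝ) :=
              Real.rpow_le_rpow_of_exponent_le (by linarith) hexp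
          _ = (1 + α) * (1 + α) := by
              rw [show (2:ℝ) = ((2:ℕ):ℝ) by norm_num, Real.rpow_natCast]; ring
      calc L ^ q * c ^ θ * (1 - θ) * y ^ θ
          = L ^ q * (1 - θ) * ((1 + α) ^ (θ + -2 / (1 - α) * θ)) / α ^ θ := by
            rw [hcθ, hyθ, Real.rpow_add hβ]; field_simp
        _ ≤ L ^ q * (1 - θ) * ((1 + α) * (1 + α)) / α ^ θ := by
            gcongr
        _ = α ^ (-(2 * α) / (1 + α)) * L ^ q * (1 - α ^ 2) := by
            rw [hnegθ, hθ]
            field_simp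
            ring
    rw [coefA] at step2
    linarith
end

section
/- Under Assumption 1, suppose f_H ∈ H is a minimizer of E over H (so ∇E(f_H) = 0). Then for every f ∈ H and every β ∈ (0,1]: ∫_Z |φ′(y, f(x))|^{1+β} dρ ≤ 2^β L^{1/α} (1+β) [E(f) − E(f_H)] + 2^β (1 − αβ)/(1+α) + 2^β ∫_Z |φ′(y, f_H(x))|^{1+β} dρ. -/
open MeasureTheory ProbabilityTheory Filter Real
open scoped RealInnerProductSpace


private lemma cont_of_holder_s4 {f' : ℝ → ℝ} {L a : ℝ} (ha : 0 < a)
    (hhold : ∀ s t : ℝ, |f' s - f' t| ≤ L * |s - t| ^ a) : Continuous f' := by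
  rw [continuous_iff_continuousAt]
  intro t
  have hg : Continuous (fun s : ℝ => L * |s - t| ^ a) := by
    apply continuous_const.mul
    exact ((continuous_abs.comp (continuous_id.sub continuous_const)).rpow_const
      (fun x => Or.inr ha.le))
  have hg0 : Tendsto (fun s : ℝ => L * |s - t| ^ a) (nhds t) (nhds 0) := by
    have := hg.tendsto t
    simpa [Real.zero_rpow ha.ne'] using this
  have h0 : Tendsto (fun s => f' s - f' t) (nhds t) (nhds 0) :=
    squeeze_zero_norm (fun s => hhold s t) hg0
  have := h0.add (tendsto_const_nhds (x := f' t))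
  simpa [ContinuousAt] using this

private lemma integral_abs_rpow {a : ℝ} (ha : 0 < a) {c : ℝ} (hc : 0 ≤ c) :
    ∫ w in (0:ℝ)..c, |w| ^ a = c ^ (1 + a) / (1 + a) := by
  have h1 : ∫ w in (0:ℝ)..c, |w| ^ a = ∫ w in (0:ℝ)..c, w ^ a := by
    apply intervalIntegral.integral_congr
    intro w hw
    rw [Set.uIcc_of_le hc] at hw
    simp only []
    rw [abs_of_nonneg hw.1]
  rw [h1, integral_rpow (Or.inl (by linarith))]
  rw [Real.zero_rpow (by linarith : a + 1 ≠ 0), add_comm a 1, sub_zero]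

private lemma integral_abs_rpow_base_left {a : ℝ} (ha : 0 < a) {p q : ℝ} (h : p ≤ q) :
    ∫ τ in p..q, |τ - p| ^ a = (q - p) ^ (1 + a) / (1 + a) := by
  have := intervalIntegral.integral_comp_sub_right (a := p) (b := q)
    (fun w : ℝ => |w| ^ a) p
  rw [this, sub_self]
  exact integral_abs_rpow ha (by linarith)

private lemma integral_abs_rpow_base_right {a : ℝ} (ha : 0 < a) {p q : ℝ} (h : p ≤ q) :
    ∫ τ in p..q, |τ - q| ^ a = (q - p) ^ (1 + a) / (1 + a) := by
  have h1 := intervalIntegral.integral_comp_sub_right (a := p) (b := q)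
    (fun w : ℝ => |w| ^ a) q
  rw [h1, sub_self]
  have h2 := intervalIntegral.integral_comp_neg (a := (0:ℝ)) (b := q - p)
    (f := fun w : ℝ => |w| ^ a)
  simp only [abs_neg, neg_zero, neg_sub] at h2
  rw [← h2]
  exact integral_abs_rpow ha (by linarith)

private lemma descent_lemma {f f' : ℝ → ℝ} {L a : ℝ} (hL : 0 < L) (ha : 0 < a)
    (hderiv : ∀ s : ℝ, HasDerivAt f (f' s) s)
    (hhold : ∀ s t : ℝ, |f' s - f' t| ≤ L * |s - t| ^ a) (s u : ℝ) :
    f u ≤ f s + f' s * (u - s) + L / (1 + a) * |u - s| ^ (1 + a) := by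
  have hcont := cont_of_holder_s4 ha hhold
  have hftc : ∀ p q : ℝ, (∫ τ in p..q, f' τ) = f q - f p := fun p q =>
    intervalIntegral.integral_eq_sub_of_hasDerivAt (fun τ _ => hderiv τ)
      (hcont.intervalIntegrable p q)
  have key : f u - f s - f' s * (u - s) = ∫ τ in s..u, (f' τ - f' s) := by
    rw [intervalIntegral.integral_sub (hcont.intervalIntegrable s u)
      (intervalIntegrable_const), hftc s u, intervalIntegral.integral_const, smul_eq_mul]
    ring
  have hgcont : Continuous fun τ => |f' τ - f' s| :=
    continuous_abs.comp (hcont.sub continuous_const)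
  have hbcont : ∀ r : ℝ, Continuous fun τ : ℝ => L * |τ - r| ^ a := fun r =>
    continuous_const.mul (((continuous_abs.comp (continuous_id.sub continuous_const)).rpow_const
      (fun x => Or.inr ha.le)))
  have hbound : |∫ τ in s..u, (f' τ - f' s)| ≤ L / (1 + a) * |u - s| ^ (1 + a) := by
    have hn := intervalIntegral.norm_integral_le_abs_integral_norm
      (f := fun τ => f' τ - f' s) (a := s) (b := u) (μ := MeasureTheory.volume)
    simp only [Real.norm_eq_abs] at hn
    rcases le_total s u with hsu | hus
    · have hnn : 0 ≤ ∫ τ in s..u, |f' τ - f' s| :=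
        intervalIntegral.integral_nonneg hsu (fun x _ => abs_nonneg _)
      rw [abs_of_nonneg hnn] at hn
      have hm : (∫ τ in s..u, |f' τ - f' s|) ≤ ∫ τ in s..u, L * |τ - s| ^ a := by
        apply intervalIntegral.integral_mono_on hsu (hgcont.intervalIntegrable s u)
          ((hbcont s).intervalIntegrable s u)
        intro x _
        exact hhold x s
      rw [intervalIntegral.integral_const_mul, integral_abs_rpow_base_left ha hsu] at hm
      calc |∫ τ in s..u, (f' τ - f' s)| ≤ _ := hn
        _ ≤ L * ((u - s) ^ (1 + a) / (1 + a)) := hm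
        _ = L / (1 + a) * |u - s| ^ (1 + a) := by
            rw [abs_of_nonneg (by linarith : (0:ℝ) ≤ u - s)]; ring
    · have hsym : (∫ τ in s..u, |f' τ - f' s|) = -(∫ τ in u..s, |f' τ - f' s|) :=
        intervalIntegral.integral_symm u s
      have hnn : 0 ≤ ∫ τ in u..s, |f' τ - f' s| :=
        intervalIntegral.integral_nonneg hus (fun x _ => abs_nonneg _)
      rw [hsym, abs_neg, abs_of_nonneg hnn] at hn
      have hm : (∫ τ in u..s, |f' τ - f' s|) ≤ ∫ τ in u..s, L * |τ - s| ^ a := by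
        apply intervalIntegral.integral_mono_on hus (hgcont.intervalIntegrable u s)
          ((hbcont s).intervalIntegrable u s)
        intro x _
        exact hhold x s
      rw [intervalIntegral.integral_const_mul, integral_abs_rpow_base_right ha hus] at hm
      calc |∫ τ in s..u, (f' τ - f' s)| ≤ _ := hn
        _ ≤ L * ((s - u) ^ (1 + a) / (1 + a)) := hm
        _ = L / (1 + a) * |u - s| ^ (1 + a) := by
            rw [abs_of_nonpos (by linarith : u - s ≤ 0), show -(u-s) = s - u by ring]; ring
  rw [← key] at hbound
  have := (abs_le.mp hbound).2
  linarith

private lemma tangent_le {f f' : ℝ → ℝ} (hconv : ConvexOn ℝ Set.univ f)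
    (hderiv : ∀ s : ℝ, HasDerivAt f (f' s) s) (t u : ℝ) :
    f t + f' t * (u - t) ≤ f u := by
  rcases lt_trichotomy u t with h | h | h
  · have hs := hconv.slope_le_of_hasDerivAt (Set.mem_univ u) (Set.mem_univ t) h (hderiv t)
    rw [slope_def_field] at hs
    rw [div_le_iff₀ (by linarith : (0:ℝ) < t - u)] at hs
    nlinarith
  · simp [h]
  · have hs := hconv.le_slope_of_hasDerivAt (Set.mem_univ t) (Set.mem_univ u) h (hderiv t)
    rw [slope_def_field] at hs
    rw [le_div_iff₀ (by linarith : (0:ℝ) < u - t)] at hs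
    nlinarith

private lemma bregman_lower {f f' : ℝ → ℝ} {L a : ℝ} (hL : 0 < L) (ha : 0 < a)
    (hconv : ConvexOn ℝ Set.univ f)
    (hderiv : ∀ s : ℝ, HasDerivAt f (f' s) s)
    (hhold : ∀ s t : ℝ, |f' s - f' t| ≤ L * |s - t| ^ a) (s t : ℝ) :
    |f' s - f' t| ^ ((1 + a) / a)
      ≤ (1 + a) / a * L ^ (1 / a) * (f s - f t - f' t * (s - t)) := by
  have hcomb : ∀ v : ℝ, (f' s - f' t) * v - L / (1 + a) * |v| ^ (1 + a)
      ≤ f s - f t - f' t * (s - t) := by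
    intro v
    have h1 := tangent_le hconv hderiv t (s - v)
    have h2 := descent_lemma hL ha hderiv hhold s (s - v)
    have habs : |s - v - s| = |v| := by rw [show s - v - s = -v by ring, abs_neg]
    rw [habs] at h2
    nlinarith [h1.trans h2]
  set b := f' s - f' t with hb
  set D := f s - f t - f' t * (s - t) with hD
  have hD0 : 0 ≤ D := by
    have := hcomb 0
    simpa [Real.zero_rpow (by linarith : (1:ℝ) + a ≠ 0)] using this
  have hM : 0 < L ^ (1 / a) := Real.rpow_pos_of_pos hL _
  rcases eq_or_ne b 0 with hb0 | hb0
  · rw [hb0, abs_zero, Real.zero_rpow (by positivity : (1 + a) / a ≠ 0)]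
    positivity
  · have hbpos : 0 < |b| := abs_pos.mpr hb0
    set r : ℝ := (|b| / L) ^ (1 / a) with hr
    have hrpos : 0 < r := Real.rpow_pos_of_pos (div_pos hbpos hL) _
    set v : ℝ := if 0 ≤ b then r else -r with hv
    have hbv : b * v = |b| * r := by
      rcases le_or_gt 0 b with hbb | hbb
      · rw [hv, if_pos hbb, abs_of_nonneg hbb]
      · rw [hv, if_neg (not_le.mpr hbb), abs_of_neg hbb]; ring
    have hvabs : |v| = r := by
      rcases le_or_gt 0 b with hbb | hbb
      · rw [hv, if_pos hbb, abs_of_pos hrpos]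
      · rw [hv, if_neg (not_le.mpr hbb), abs_neg, abs_of_pos hrpos]
    have hkey := hcomb v
    rw [hbv, hvabs] at hkey
    set e : ℝ := |b| ^ ((1 + a) / a) with he
    have hepos : 0 < e := Real.rpow_pos_of_pos hbpos _
    have h1 : |b| * r = e / L ^ (1 / a) := by
      rw [hr, Real.div_rpow hbpos.le hL.le, he]
      rw [show (1 + a) / a = 1 + 1 / a by field_simp; ring]
      rw [Real.rpow_add hbpos, Real.rpow_one]
      ring
    have h2 : r ^ (1 + a) = e / (L * L ^ (1 / a)) := by
      rw [hr, ← Real.rpow_mul (div_nonneg hbpos.le hL.le)]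
      rw [show 1 / a * (1 + a) = (1 + a) / a by field_simp]
      rw [Real.div_rpow hbpos.le hL.le, ← he]
      congr 1
      rw [show (1 + a) / a = 1 + 1 / a by field_simp; ring]
      rw [Real.rpow_add hL, Real.rpow_one]
    rw [h1, h2] at hkey
    -- hkey : e / L^(1/a) - L / (1+a) * (e / (L * L^(1/a))) ≤ D
    have ha1 : (0:ℝ) < 1 + a := by linarith
    have hkey2 : e * a ≤ (1 + a) * L ^ (1 / a) * D := by
      have h3 : L / (1 + a) * (e / (L * L ^ (1 / a))) = e / ((1 + a) * L ^ (1 / a)) := by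
        field_simp
      rw [h3] at hkey
      have h4 : e / L ^ (1 / a) - e / ((1 + a) * L ^ (1 / a))
          = e * a / ((1 + a) * L ^ (1 / a)) := by
        field_simp
        ring
      rw [h4, div_le_iff₀ (by positivity)] at hkey
      linarith
    rw [show (1 + a) / a * L ^ (1 / a) * D = (1 + a) * L ^ (1 / a) * D / a by ring,
      le_div_iff₀ ha]
    linarith

private lemma young_pow {p q : ℝ} (hp : 0 < p) (hpq : p ≤ q) {u : ℝ} (hu : 0 ≤ u) :
    u ^ p ≤ p / q * u ^ q + (1 - p / q) := by
  have hq : 0 < q := lt_of_lt_of_le hp hpq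
  have hw2 : 0 ≤ 1 - p / q := sub_nonneg.mpr ((div_le_one hq).mpr hpq)
  have h := Real.geom_mean_le_arith_mean2_weighted (div_nonneg hp.le hq.le) hw2
    (Real.rpow_nonneg hu q) zero_le_one (by field_simp; ring)
  rw [Real.one_rpow, mul_one, mul_one, ← Real.rpow_mul hu] at h
  rw [show q * (p / q) = p by field_simp] at h
  exact h

private lemma two_rpow_bound {x y p : ℝ} (hx : 0 ≤ x) (hy : 0 ≤ y) (hp : 1 ≤ p) :
    (x + y) ^ p ≤ 2 ^ (p - 1) * (x ^ p + y ^ p) := by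
  have h := NNReal.rpow_add_le_mul_rpow_add_rpow ⟨x, hx⟩ ⟨y, hy⟩ hp
  have h2 := NNReal.coe_le_coe.mpr h
  push_cast at h2
  exact h2

private lemma pointwise_bound {f f' : ℝ → ℝ} {L a β : ℝ} (hL : 0 < L)
    (ha : a ∈ Set.Ioc (0:ℝ) 1) (hβ : β ∈ Set.Ioc (0:ℝ) 1)
    (hconv : ConvexOn ℝ Set.univ f)
    (hderiv : ∀ s : ℝ, HasDerivAt f (f' s) s)
    (hhold : ∀ s t : ℝ, |f' s - f' t| ≤ L * |s - t| ^ a) (s t : ℝ) :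
    |f' s| ^ (1 + β) ≤ 2 ^ β * ((1 + β) * L ^ (1/a) * (f s - f t - f' t * (s - t))
      + (1 - a * β) / (1 + a) + |f' t| ^ (1 + β)) := by
  obtain ⟨ha0, ha1⟩ := ha
  obtain ⟨hβ0, hβ1⟩ := hβ
  set D := f s - f t - f' t * (s - t) with hDdef
  have hD0 : 0 ≤ D := by
    have := tangent_le hconv hderiv t s
    rw [hDdef]; linarith
  set b := |f' s - f' t| with hbdef
  have h1 : |f' s| ≤ b + |f' t| := by
    have := abs_sub_abs_le_abs_sub (f' s) (f' t)
    rw [hbdef]; linarith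
  have h2 : |f' s| ^ (1+β) ≤ (b + |f' t|) ^ (1+β) :=
    Real.rpow_le_rpow (abs_nonneg _) h1 (by linarith)
  have h3 : (b + |f' t|) ^ (1+β) ≤ 2 ^ β * (b ^ (1+β) + |f' t| ^ (1+β)) := by
    have := two_rpow_bound (abs_nonneg (f' s - f' t)) (abs_nonneg (f' t))
      (by linarith : (1:ℝ) ≤ 1 + β)
    rw [show (1:ℝ) + β - 1 = β by ring] at this
    exact this
  have hpq : 1 + β ≤ (1 + a)/a := by
    rw [le_div_iff₀ ha0]; nlinarith
  have h4 : b ^ (1+β) ≤ (1+β)/((1+a)/a) * b ^ ((1+a)/a) + (1 - (1+β)/((1+a)/a)) :=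
    young_pow (by linarith) hpq (abs_nonneg _)
  have h5 := bregman_lower hL ha0 hconv hderiv hhold s t
  rw [← hbdef, ← hDdef] at h5
  have h6 : b ^ (1+β) ≤ (1+β) * L^(1/a) * D + (1 - a*β)/(1+a) := by
    have hc : (0:ℝ) ≤ (1+β)/((1+a)/a) := by positivity
    have h7 := mul_le_mul_of_nonneg_left h5 hc
    have h8 : (1+β)/((1+a)/a) * ((1 + a) / a * L ^ (1 / a) * D)
        = (1+β) * L^(1/a) * D := by
      field_simp
    have h9 : 1 - (1+β)/((1+a)/a) = (1 - a*β)/(1+a) := by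
      field_simp
      ring
    rw [h8] at h7
    rw [h9] at h4
    linarith
  have h2pow : (0:ℝ) ≤ 2 ^ β := (Real.rpow_pos_of_pos two_pos β).le
  calc |f' s| ^ (1+β) ≤ (b + |f' t|) ^ (1+β) := h2
    _ ≤ 2 ^ β * (b ^ (1+β) + |f' t| ^ (1+β)) := h3
    _ ≤ 2 ^ β * ((1+β) * L^(1/a) * D + (1 - a*β)/(1+a) + |f' t| ^ (1+β)) := by
        apply mul_le_mul_of_nonneg_left _ h2pow
        linarith

private lemma deriv_bound {f f' : ℝ → ℝ} {L a M0 : ℝ} (hL : 0 < L) (ha : 0 < a)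
    (hnonneg : ∀ s : ℝ, 0 ≤ f s) (hf0 : f 0 ≤ M0)
    (hderiv : ∀ s : ℝ, HasDerivAt f (f' s) s)
    (hhold : ∀ s t : ℝ, |f' s - f' t| ≤ L * |s - t| ^ a) (t : ℝ) :
    |f' t| ≤ L * |t| ^ a + (M0 + L / (1 + a)) := by
  have hone : |(1:ℝ)| ^ (1+a) = 1 := by
    rw [abs_one, Real.one_rpow]
  have hu1 := descent_lemma hL ha hderiv hhold 0 1
  have hu2 := descent_lemma hL ha hderiv hhold 0 (-1)
  rw [show (1:ℝ) - 0 = 1 by ring, hone] at hu1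
  rw [show (-1:ℝ) - 0 = -(1:ℝ) by ring, abs_neg, hone] at hu2
  have hp1 := hnonneg 1
  have hp2 := hnonneg (-1)
  have h0bound : |f' 0| ≤ M0 + L / (1 + a) := by
    rw [abs_le]
    constructor <;> nlinarith
  have htri : |f' t| ≤ |f' t - f' 0| + |f' 0| := by
    have := abs_sub_abs_le_abs_sub (f' t) (f' 0)
    linarith
  have hh := hhold t 0
  rw [sub_zero] at hh
  linarith

/-- Lemma 2 (gradient bound): under Assumption 1, if `f_H` minimizes the generalization error
`E` over `H` (so `∇E(f_H) = 0`), then for every `f ∈ H` and `β ∈ (0,1]`,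
`∫ |φ′(y, f(x))|^{1+β} dρ` is bounded by excess generalization error terms. -/
theorem moment_bound_of_loss_derivative
    {X : Type*} [MeasurableSpace X] {Y : Set ℝ}
    {H : Type*} [NormedAddCommGroup H] [InnerProductSpace ℝ H] [CompleteSpace H]
    [MeasurableSpace H] [BorelSpace H] [SecondCountableTopology H]
    (K : X → H) (hKmeas : Measurable K)
    (κ : ℝ) (hκ : ∀ x : X, ‖K x‖ ≤ κ)
    (L α : ℝ) (hL : 0 < L) (hα : α ∈ Set.Ioc (0 : ℝ) 1)
    (φ φ' : ℝ → ℝ → ℝ)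
    (hφmeas : Measurable fun p : ℝ × ℝ => φ p.1 p.2)
    (hφ'meas : Measurable fun p : ℝ × ℝ => φ' p.1 p.2)
    (hφnonneg : ∀ y ∈ Y, ∀ s : ℝ, 0 ≤ φ y s)
    (hφconv : ∀ y ∈ Y, ConvexOn ℝ Set.univ (φ y))
    (hφderiv : ∀ y ∈ Y, ∀ s : ℝ, HasDerivAt (φ y) (φ' y s) s)
    (hφholder : ∀ y ∈ Y, ∀ s t : ℝ, |φ' y s - φ' y t| ≤ L * |s - t| ^ α)
    (ρ : Measure (X × Y)) [IsProbabilityMeasure ρ]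
    (E : H → ℝ) (hE : E = fun g : H => ∫ z : X × Y, φ (z.2 : ℝ) ⟪g, K z.1⟫ ∂ρ)
    (hEint : ∀ g : H, Integrable (fun z : X × Y => φ (z.2 : ℝ) ⟪g, K z.1⟫) ρ)
    (hgint : ∀ g : H, Integrable (fun z : X × Y => φ' (z.2 : ℝ) ⟪g, K z.1⟫ • K z.1) ρ)
    (fH : H) (hmin : ∀ g : H, E fH ≤ E g)
    (hgradH : (∫ z : X × Y, φ' (z.2 : ℝ) ⟪fH, K z.1⟫ • K z.1 ∂ρ) = 0)
    (M0 MH : ℝ) (hM0 : ∀ z : X × Y, φ (z.2 : ℝ) 0 ≤ M0)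
    (hMH : ∀ z : X × Y, φ (z.2 : ℝ) ⟪fH, K z.1⟫ ≤ MH)
    : ∀ β ∈ Set.Ioc (0 : ℝ) 1, ∀ g : H,
      (∫ z : X × Y, |φ' (z.2 : ℝ) ⟪g, K z.1⟫| ^ (1 + β) ∂ρ)
        ≤ (2 : ℝ) ^ β * L ^ (1 / α) * (1 + β) * (E g - E fH)
          + (2 : ℝ) ^ β * (1 - α * β) / (1 + α)
          + (2 : ℝ) ^ β * ∫ z : X × Y, |φ' (z.2 : ℝ) ⟪fH, K z.1⟫| ^ (1 + β) ∂ρ := by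
  intro β hβ g
  obtain ⟨hα0, hα1⟩ := hα
  obtain ⟨hβ0, hβ1⟩ := hβ
  -- nonemptiness
  have hne : Nonempty (X × Y) := by
    by_contra h
    rw [not_nonempty_iff] at h
    have h1 : ρ Set.univ = 1 := measure_univ
    rw [Set.univ_eq_empty_iff.mpr h, measure_empty] at h1
    exact zero_ne_one h1
  obtain ⟨x₀, y₀⟩ := hne
  have hκ0 : (0:ℝ) ≤ κ := le_trans (norm_nonneg _) (hκ x₀)
  have hM0' : (0:ℝ) ≤ M0 := le_trans (hφnonneg _ y₀.2 0) (hM0 (x₀, y₀))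
  -- pointwise bound
  have hpt : ∀ z : X × Y, |φ' (z.2:ℝ) ⟪g, K z.1⟫| ^ (1+β)
      ≤ 2^β * ((1+β) * L^(1/α)
          * (φ (z.2:ℝ) ⟪g, K z.1⟫ - φ (z.2:ℝ) ⟪fH, K z.1⟫
            - φ' (z.2:ℝ) ⟪fH, K z.1⟫ * (⟪g, K z.1⟫ - ⟪fH, K z.1⟫))
        + (1 - α*β)/(1+α) + |φ' (z.2:ℝ) ⟪fH, K z.1⟫| ^ (1+β)) := fun z =>
    pointwise_bound hL ⟨hα0, hα1⟩ ⟨hβ0, hβ1⟩ (hφconv _ z.2.2) (hφderiv _ z.2.2)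
      (hφholder _ z.2.2) _ _
  -- measurability
  have hmeasS : ∀ h : H, Measurable fun z : X × Y => ⟪h, K z.1⟫ := fun h =>
    Measurable.inner measurable_const (hKmeas.comp measurable_fst)
  have hmeasY : Measurable fun z : X × Y => (z.2 : ℝ) :=
    measurable_subtype_coe.comp measurable_snd
  have hmeasφ' : ∀ h : H, Measurable fun z : X × Y => φ' (z.2:ℝ) ⟪h, K z.1⟫ := fun h =>
    hφ'meas.comp (hmeasY.prodMk (hmeasS h))
  -- bound on φ' at fH
  set CH : ℝ := L * (κ * ‖fH‖) ^ α + (M0 + L / (1 + α)) with hCHdef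
  have hCH0 : (0:ℝ) ≤ CH := by
    apply add_nonneg (mul_nonneg hL.le (Real.rpow_nonneg (by positivity) _))
    exact add_nonneg hM0' (by positivity)
  have hCH : ∀ z : X × Y, |φ' (z.2:ℝ) ⟪fH, K z.1⟫| ≤ CH := by
    intro z
    have hb := deriv_bound hL hα0 (hφnonneg _ z.2.2) (hM0 z) (hφderiv _ z.2.2)
      (hφholder _ z.2.2) ⟪fH, K z.1⟫
    have hinner : |⟪fH, K z.1⟫| ≤ κ * ‖fH‖ := by
      have h1 := abs_real_inner_le_norm fH (K z.1)
      have h2 := hκ z.1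
      nlinarith [norm_nonneg fH]
    have h3 : |⟪fH, K z.1⟫| ^ α ≤ (κ * ‖fH‖) ^ α :=
      Real.rpow_le_rpow (abs_nonneg _) hinner hα0.le
    have h4 : L * |⟪fH, K z.1⟫| ^ α ≤ L * (κ * ‖fH‖) ^ α :=
      mul_le_mul_of_nonneg_left h3 hL.le
    rw [hCHdef]
    linarith
  -- integrability of |φ'(fH)|^{1+β}
  have hIfH : Integrable (fun z : X × Y => |φ' (z.2:ℝ) ⟪fH, K z.1⟫| ^ (1+β)) ρ := by
    apply Integrable.mono' (integrable_const (CH ^ (1+β)))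
    · have hrpowc : Continuous fun r : ℝ => r ^ (1+β) :=
        continuous_id.rpow_const (fun x => Or.inr (by linarith))
      exact (hrpowc.measurable.comp ((hmeasφ' fH).abs)).aestronglyMeasurable
    · filter_upwards with z
      rw [Real.norm_eq_abs, abs_of_nonneg (Real.rpow_nonneg (abs_nonneg _) _)]
      exact Real.rpow_le_rpow (abs_nonneg _) (hCH z) (by linarith)
  -- the cross term
  have hTeq : ∀ z : X × Y, φ' (z.2:ℝ) ⟪fH, K z.1⟫ * (⟪g, K z.1⟫ - ⟪fH, K z.1⟫)
      = ⟪g - fH, φ' (z.2:ℝ) ⟪fH, K z.1⟫ • K z.1⟫ := by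
    intro z
    rw [real_inner_smul_right, inner_sub_left]
  have hTint : Integrable
      (fun z : X × Y => φ' (z.2:ℝ) ⟪fH, K z.1⟫ * (⟪g, K z.1⟫ - ⟪fH, K z.1⟫)) ρ := by
    have h1 := (innerSL ℝ (g - fH)).integrable_comp (hgint fH)
    refine h1.congr (Filter.Eventually.of_forall fun z => ?_)
    simp only [innerSL_apply_apply]
    exact (hTeq z).symm
  have hTzero : (∫ z : X × Y, φ' (z.2:ℝ) ⟪fH, K z.1⟫ * (⟪g, K z.1⟫ - ⟪fH, K z.1⟫) ∂ρ)
      = 0 := by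
    have h1 := (innerSL ℝ (g - fH)).integral_comp_comm (hgint fH)
    rw [hgradH, map_zero] at h1
    rw [← h1]
    refine integral_congr_ae (Filter.Eventually.of_forall fun z => ?_)
    simp only [innerSL_apply_apply]
    exact hTeq z
  -- integrability of D
  have hDint : Integrable (fun z : X × Y =>
      φ (z.2:ℝ) ⟪g, K z.1⟫ - φ (z.2:ℝ) ⟪fH, K z.1⟫
        - φ' (z.2:ℝ) ⟪fH, K z.1⟫ * (⟪g, K z.1⟫ - ⟪fH, K z.1⟫)) ρ :=
    ((hEint g).sub (hEint fH)).sub hTint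
  have hDval : (∫ z : X × Y, (φ (z.2:ℝ) ⟪g, K z.1⟫ - φ (z.2:ℝ) ⟪fH, K z.1⟫
        - φ' (z.2:ℝ) ⟪fH, K z.1⟫ * (⟪g, K z.1⟫ - ⟪fH, K z.1⟫)) ∂ρ)
      = E g - E fH := by
    have hABint : Integrable (fun z : X × Y =>
        φ (z.2:ℝ) ⟪g, K z.1⟫ - φ (z.2:ℝ) ⟪fH, K z.1⟫) ρ := (hEint g).sub (hEint fH)
    rw [integral_sub hABint hTint, hTzero, sub_zero,
      integral_sub (hEint g) (hEint fH), hE]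
  -- RHS integrable
  have hRHSint : Integrable (fun z : X × Y =>
      2^β * ((1+β) * L^(1/α)
          * (φ (z.2:ℝ) ⟪g, K z.1⟫ - φ (z.2:ℝ) ⟪fH, K z.1⟫
            - φ' (z.2:ℝ) ⟪fH, K z.1⟫ * (⟪g, K z.1⟫ - ⟪fH, K z.1⟫))
        + (1 - α*β)/(1+α) + |φ' (z.2:ℝ) ⟪fH, K z.1⟫| ^ (1+β))) ρ := by
    apply Integrable.const_mul
    exact ((hDint.const_mul _).add (integrable_const _)).add hIfH
  -- main estimate
  have hmain : (∫ z : X × Y, |φ' (z.2:ℝ) ⟪g, K z.1⟫| ^ (1+β) ∂ρ)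
      ≤ ∫ z : X × Y, 2^β * ((1+β) * L^(1/α)
          * (φ (z.2:ℝ) ⟪g, K z.1⟫ - φ (z.2:ℝ) ⟪fH, K z.1⟫
            - φ' (z.2:ℝ) ⟪fH, K z.1⟫ * (⟪g, K z.1⟫ - ⟪fH, K z.1⟫))
        + (1 - α*β)/(1+α) + |φ' (z.2:ℝ) ⟪fH, K z.1⟫| ^ (1+β)) ∂ρ := by
    apply integral_mono_of_nonneg
    · filter_upwards with z
      exact Real.rpow_nonneg (abs_nonneg _) _
    · exact hRHSint
    · filter_upwards with z
      exact hpt z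
  -- compute RHS integral
  have hI1 : Integrable (fun z : X × Y => (1+β) * L^(1/α)
      * (φ (z.2:ℝ) ⟪g, K z.1⟫ - φ (z.2:ℝ) ⟪fH, K z.1⟫
        - φ' (z.2:ℝ) ⟪fH, K z.1⟫ * (⟪g, K z.1⟫ - ⟪fH, K z.1⟫))) ρ := hDint.const_mul _
  have hI2 : Integrable (fun z : X × Y => (1+β) * L^(1/α)
      * (φ (z.2:ℝ) ⟪g, K z.1⟫ - φ (z.2:ℝ) ⟪fH, K z.1⟫
        - φ' (z.2:ℝ) ⟪fH, K z.1⟫ * (⟪g, K z.1⟫ - ⟪fH, K z.1⟫))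
      + (1 - α*β)/(1+α)) ρ := hI1.add (integrable_const _)
  rw [integral_const_mul, integral_add hI2 hIfH,
    integral_add hI1 (integrable_const _), integral_const_mul, hDval,
    integral_const] at hmain
  simp only [measure_univ, probReal_univ, ENNReal.toReal_one, smul_eq_mul, one_mul] at hmain
  calc (∫ z : X × Y, |φ' (z.2:ℝ) ⟪g, K z.1⟫| ^ (1+β) ∂ρ) ≤ _ := hmain
    _ = (2 : ℝ) ^ β * L ^ (1 / α) * (1 + β) * (E g - E fH)
          + (2 : ℝ) ^ β * (1 - α * β) / (1 + α)
          + (2 : ℝ) ^ β * ∫ z : X × Y, |φ' (z.2 : ℝ) ⟪fH, K z.1⟫| ^ (1 + β) ∂ρ := by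
      ring
end

section
/- Let {f_t}_{t∈ℕ} be the online gradient descent iterates. Suppose that for every y ∈ Y the function φ(y,·) : ℝ → [0,∞) is convex and its derivative φ′(y,·) is (1,L)-Hölder continuous (i.e., |φ′(y,s) − φ′(y,s̃)| ≤ L|s − s̃| for all s, s̃). Assume η_t ≤ 1/(6Lκ²) for all t ∈ ℕ and E(f_1) ≠ E(f_H). If lim_{t→∞} 𝔼[E(f_t)] = E(f_H), then ∑_{t=1}^∞ η_t = ∞. -/
set_option maxHeartbeats 1000000

open MeasureTheory ProbabilityTheory Filter Real
open scoped RealInnerProductSpace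

/-- Tangent line inequality for a convex differentiable function on ℝ. -/
lemma ogd_tangent_le {g G : ℝ → ℝ} (hconv : ConvexOn ℝ Set.univ g)
    (hd : ∀ s, HasDerivAt g (G s) s) (a b : ℝ) :
    g a + G a * (b - a) ≤ g b := by
  rcases lt_trichotomy a b with h | h | h
  · have hs := hconv.le_slope_of_hasDerivAt (Set.mem_univ a) (Set.mem_univ b) h (hd a)
    rw [slope_def_field] at hs
    have hba : 0 < b - a := by linarith
    have := (le_div_iff₀ hba).mp hs
    linarith
  · simp [h]
  · have hs := hconv.slope_le_of_hasDerivAt (Set.mem_univ b) (Set.mem_univ a) h (hd a)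
    rw [slope_def_field] at hs
    have hba : 0 < a - b := by linarith
    have := (div_le_iff₀ hba).mp hs
    nlinarith

/-- Quadratic upper bound for a convex function with Lipschitz derivative. -/
lemma ogd_smooth_le {g G : ℝ → ℝ} {L : ℝ} (hconv : ConvexOn ℝ Set.univ g)
    (hd : ∀ s, HasDerivAt g (G s) s) (hlip : ∀ s t, |G s - G t| ≤ L * |s - t|) (a b : ℝ) :
    g b ≤ g a + G a * (b - a) + L * (b - a) ^ 2 := by
  have h1 := ogd_tangent_le hconv hd b a
  have h2 : (G b - G a) * (b - a) ≤ L * (b - a) ^ 2 := by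
    calc (G b - G a) * (b - a) ≤ |(G b - G a) * (b - a)| := le_abs_self _
    _ = |G b - G a| * |b - a| := abs_mul _ _
    _ ≤ (L * |b - a|) * |b - a| := by
        nlinarith [hlip b a, abs_nonneg (b - a)]
    _ = L * (b - a) ^ 2 := by rw [mul_assoc, ← sq_abs]; ring
  nlinarith

/-- Self-bounding property of the derivative of a nonnegative smooth convex function. -/
lemma ogd_deriv_sq_le {g G : ℝ → ℝ} {L : ℝ} (hL : 0 < L) (hconv : ConvexOn ℝ Set.univ g)
    (hd : ∀ s, HasDerivAt g (G s) s) (hlip : ∀ s t, |G s - G t| ≤ L * |s - t|)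
    (hnonneg : ∀ s, 0 ≤ g s) (a : ℝ) :
    (G a) ^ 2 ≤ 4 * L * g a := by
  have h := ogd_smooth_le hconv hd hlip a (a - G a / (2 * L))
  have h0 := hnonneg (a - G a / (2 * L))
  have key : g a + G a * ((a - G a / (2 * L)) - a) + L * ((a - G a / (2 * L)) - a) ^ 2
      = g a - (G a) ^ 2 / (4 * L) := by
    field_simp
    ring
  rw [key] at h
  have h2 : (G a) ^ 2 / (4 * L) ≤ g a := by linarith
  have := (div_le_iff₀ (by positivity : (0:ℝ) < 4 * L)).mp h2
  linarith

/-- Monotonicity of `Indep` in the σ-algebras. -/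
lemma ogd_indep_mono {Ω : Type*} {mΩ : MeasurableSpace Ω} {μ : Measure Ω}
    {m1 m2 m1' m2' : MeasurableSpace Ω} (h : ProbabilityTheory.Indep m1 m2 μ)
    (h1 : m1' ≤ m1) (h2 : m2' ≤ m2) : ProbabilityTheory.Indep m1' m2' μ := by
  rw [ProbabilityTheory.Indep_iff] at h ⊢
  exact fun t1 t2 ht1 ht2 => h t1 t2 (h1 _ ht1) (h2 _ ht2)

/-- Theorem 2 (necessary condition for convergence in expectation): for a convex loss with
`(1, L)`-Hölder continuous derivative and step sizes `η_t ≤ 1/(6Lκ²)`, if the expected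
generalization errors of online gradient descent converge to `E(f_H)` and `E(f_1) ≠ E(f_H)`,
then `∑ η_t = ∞`. -/
theorem step_sizes_diverge_of_expected_convergence
    {X : Type*} [MeasurableSpace X] {Y : Set ℝ}
    {H : Type*} [NormedAddCommGroup H] [InnerProductSpace ℝ H] [CompleteSpace H]
    [MeasurableSpace H] [BorelSpace H] [SecondCountableTopology H]
    (K : X → H) (hKmeas : Measurable K)
    (κ : ℝ) (hκ : ∀ x : X, ‖K x‖ ≤ κ)
    (L : ℝ) (hL : 0 < L)
    (φ φ' : ℝ → ℝ → ℝ)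
    (hφmeas : Measurable fun p : ℝ × ℝ => φ p.1 p.2)
    (hφ'meas : Measurable fun p : ℝ × ℝ => φ' p.1 p.2)
    (hφnonneg : ∀ y ∈ Y, ∀ s : ℝ, 0 ≤ φ y s)
    (hφconv : ∀ y ∈ Y, ConvexOn ℝ Set.univ (φ y))
    (hφderiv : ∀ y ∈ Y, ∀ s : ℝ, HasDerivAt (φ y) (φ' y s) s)
    (hφlip : ∀ y ∈ Y, ∀ s t : ℝ, |φ' y s - φ' y t| ≤ L * |s - t|)
    (ρ : Measure (X × Y)) [IsProbabilityMeasure ρ]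
    (E : H → ℝ) (hE : E = fun g : H => ∫ z : X × Y, φ (z.2 : ℝ) ⟪g, K z.1⟫ ∂ρ)
    (hEint : ∀ g : H, Integrable (fun z : X × Y => φ (z.2 : ℝ) ⟪g, K z.1⟫) ρ)
    (hgint : ∀ g : H, Integrable (fun z : X × Y => φ' (z.2 : ℝ) ⟪g, K z.1⟫ • K z.1) ρ)
    (fH : H) (hmin : ∀ g : H, E fH ≤ E g)
    (hgradH : (∫ z : X × Y, φ' (z.2 : ℝ) ⟪fH, K z.1⟫ • K z.1 ∂ρ) = 0)
    (M0 MH : ℝ) (hM0 : ∀ z : X × Y, φ (z.2 : ℝ) 0 ≤ M0)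
    (hMH : ∀ z : X × Y, φ (z.2 : ℝ) ⟪fH, K z.1⟫ ≤ MH)
    {Ω : Type*} [MeasurableSpace Ω] (P : Measure Ω) [IsProbabilityMeasure P]
    (zs : ℕ → Ω → X × Y) (hzmeas : ∀ t, Measurable (zs t))
    (hzdist : ∀ t, Measure.map (zs t) P = ρ)
    (hziid : iIndepFun zs P)
    (η : ℕ → ℝ) (hηpos : ∀ t, 0 < η t)
    (f : ℕ → Ω → H) (hf1 : ∀ ω : Ω, f 1 ω = 0)
    (hfrec : ∀ t, 1 ≤ t → ∀ ω : Ω,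
      f (t + 1) ω = f t ω - (η t * φ' (((zs t ω).2 : Y) : ℝ) ⟪f t ω, K (zs t ω).1⟫) • K (zs t ω).1)
    (hηbound : ∀ t, 1 ≤ t → η t ≤ 1 / (6 * L * κ ^ 2))
    (hne : ∀ ω : Ω, E (f 1 ω) ≠ E fH)
    (hconv : Tendsto (fun t => ∫ ω, E (f t ω) ∂P) atTop (nhds (E fH))) :
    Tendsto (fun T => ∑ t ∈ Finset.Icc 1 T, η t) atTop atTop := by
  classical
  -- Nonemptiness and positivity facts
  have hZne : Nonempty (X × Y) := by
    by_contra h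
    rw [not_nonempty_iff] at h
    have h1 : ρ Set.univ = 1 := measure_univ
    rw [Set.univ_eq_empty_iff.mpr h] at h1
    simp at h1
  obtain ⟨z0⟩ := hZne
  have hΩne : Nonempty Ω := by
    by_contra h
    rw [not_nonempty_iff] at h
    have h1 : P Set.univ = 1 := measure_univ
    rw [Set.univ_eq_empty_iff.mpr h] at h1
    simp at h1
  obtain ⟨ω0⟩ := hΩne
  have hκ0 : 0 ≤ κ := le_trans (norm_nonneg _) (hκ z0.1)
  have hκpos : 0 < κ := by
    rcases hκ0.lt_or_eq with h | h
    · exact h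
    · exfalso
      have h1 := hηbound 1 le_rfl
      rw [← h] at h1
      norm_num at h1
      exact absurd (lt_of_lt_of_le (hηpos 1) h1) (by norm_num)
  have hLκ : 0 < L * κ ^ 2 := by positivity
  have hM0nn : 0 ≤ M0 := le_trans (hφnonneg _ z0.2.2 0) (hM0 z0)
  set C0 : ℝ := 2 * Real.sqrt (L * M0) with hC0def
  have hC0 : 0 ≤ C0 := by positivity
  have hmemY : ∀ z : X × Y, ((z.2 : Y) : ℝ) ∈ Y := fun z => z.2.2
  have hφsq : ∀ z : X × Y, ∀ s, (φ' (z.2 : ℝ) s) ^ 2 ≤ 4 * L * φ (z.2 : ℝ) s := fun z s =>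
    ogd_deriv_sq_le hL (hφconv _ (hmemY z)) (hφderiv _ (hmemY z)) (hφlip _ (hmemY z))
      (hφnonneg _ (hmemY z)) s
  have hφ'0 : ∀ z : X × Y, |φ' (z.2 : ℝ) 0| ≤ C0 := by
    intro z
    have h1 : (φ' (z.2 : ℝ) 0) ^ 2 ≤ 4 * (L * M0) := by nlinarith [hφsq z 0, hM0 z]
    calc |φ' (z.2 : ℝ) 0| = Real.sqrt ((φ' (z.2 : ℝ) 0) ^ 2) := (Real.sqrt_sq_eq_abs _).symm
    _ ≤ Real.sqrt (4 * (L * M0)) := Real.sqrt_le_sqrt h1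
    _ = C0 := by
        rw [show (4 : ℝ) * (L * M0) = 2 ^ 2 * (L * M0) by norm_num, Real.sqrt_mul (by positivity),
          Real.sqrt_sq (by norm_num : (0:ℝ) ≤ 2)]
  have hφ'b : ∀ z : X × Y, ∀ s : ℝ, |φ' (z.2 : ℝ) s| ≤ C0 + L * |s| := by
    intro z s
    have h1 := hφlip _ (hmemY z) s 0
    rw [sub_zero] at h1
    have h2 := abs_sub_abs_le_abs_sub (φ' (z.2 : ℝ) s) (φ' (z.2 : ℝ) 0)
    have h3 := hφ'0 z
    linarith
  -- The gradient map
  set grad : H → H := fun g => ∫ z : X × Y, φ' (z.2 : ℝ) ⟪g, K z.1⟫ • K z.1 ∂ρ with hgraddef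
  have hinner_int : ∀ g h : H, Integrable
      (fun z : X × Y => φ' (z.2 : ℝ) ⟪g, K z.1⟫ * ⟪h, K z.1⟫) ρ := by
    intro g h
    have := (innerSL ℝ h).integrable_comp (hgint g)
    simpa [real_inner_smul_right, mul_comm] using this
  have hinner_int_eq : ∀ g h : H,
      ∫ z : X × Y, φ' (z.2 : ℝ) ⟪g, K z.1⟫ * ⟪h, K z.1⟫ ∂ρ = ⟪h, grad g⟫ := by
    intro g h
    have h1 : ⟪h, grad g⟫ = ∫ z : X × Y, ⟪h, φ' (z.2 : ℝ) ⟪g, K z.1⟫ • K z.1⟫ ∂ρ :=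
      (integral_inner (hgint g) h).symm
    rw [h1]
    simp_rw [real_inner_smul_right]
  -- Lower (tangent) bound for E
  have hElow : ∀ g h : H, E g + ⟪grad g, h - g⟫ ≤ E h := by
    intro g h
    have hpt : ∀ z : X × Y, φ (z.2 : ℝ) ⟪g, K z.1⟫
        + φ' (z.2 : ℝ) ⟪g, K z.1⟫ * ⟪h - g, K z.1⟫ ≤ φ (z.2 : ℝ) ⟪h, K z.1⟫ := by
      intro z
      have h1 := ogd_tangent_le (hφconv _ (hmemY z)) (hφderiv _ (hmemY z))
        ⟪g, K z.1⟫ ⟪h, K z.1⟫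
      rw [inner_sub_left]
      linarith
    have hint1 : Integrable (fun z : X × Y => φ (z.2 : ℝ) ⟪g, K z.1⟫
        + φ' (z.2 : ℝ) ⟪g, K z.1⟫ * ⟪h - g, K z.1⟫) ρ := (hEint g).add (hinner_int g (h - g))
    have h2 := integral_mono hint1 (hEint h) hpt
    rw [integral_add (hEint g) (hinner_int g (h - g)), hinner_int_eq g (h - g)] at h2
    rw [hE]
    rw [real_inner_comm]
    exact h2
  -- Upper (smoothness) bound for E
  have hEup : ∀ g h : H, E h ≤ E g + ⟪grad g, h - g⟫ + L * κ ^ 2 * ‖h - g‖ ^ 2 := by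
    intro g h
    have hpt : ∀ z : X × Y, φ (z.2 : ℝ) ⟪h, K z.1⟫ ≤ φ (z.2 : ℝ) ⟪g, K z.1⟫
        + φ' (z.2 : ℝ) ⟪g, K z.1⟫ * ⟪h - g, K z.1⟫ + L * κ ^ 2 * ‖h - g‖ ^ 2 := by
      intro z
      have h1 := ogd_smooth_le (hφconv _ (hmemY z)) (hφderiv _ (hmemY z)) (hφlip _ (hmemY z))
        ⟪g, K z.1⟫ ⟪h, K z.1⟫
      have h2 : ⟪h, K z.1⟫ - ⟪g, K z.1⟫ = ⟪h - g, K z.1⟫ := (inner_sub_left _ _ _).symm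
      rw [h2] at h1
      have h3 : |⟪h - g, K z.1⟫| ≤ ‖h - g‖ * κ := by
        calc |⟪h - g, K z.1⟫| ≤ ‖h - g‖ * ‖K z.1‖ := abs_real_inner_le_norm _ _
        _ ≤ ‖h - g‖ * κ := by nlinarith [norm_nonneg (h - g), hκ z.1]
      have h4 : (⟪h - g, K z.1⟫) ^ 2 ≤ κ ^ 2 * ‖h - g‖ ^ 2 := by
        nlinarith [abs_nonneg (⟪h - g, K z.1⟫), sq_abs (⟪h - g, K z.1⟫),
          norm_nonneg (h - g)]
      nlinarith [h1, h4]
    have hint0 : Integrable (fun z : X × Y => φ (z.2 : ℝ) ⟪g, K z.1⟫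
        + φ' (z.2 : ℝ) ⟪g, K z.1⟫ * ⟪h - g, K z.1⟫) ρ := (hEint g).add (hinner_int g (h - g))
    have hint1 : Integrable (fun z : X × Y => φ (z.2 : ℝ) ⟪g, K z.1⟫
        + φ' (z.2 : ℝ) ⟪g, K z.1⟫ * ⟪h - g, K z.1⟫ + L * κ ^ 2 * ‖h - g‖ ^ 2) ρ :=
      hint0.add (integrable_const _)
    have h2 := integral_mono (hEint h) hint1 hpt
    rw [integral_add hint0 (integrable_const _),
      integral_add (hEint g) (hinner_int g (h - g)), hinner_int_eq g (h - g),
      integral_const, probReal_univ] at h2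
    have h3 : (⟪h - g, grad g⟫ : ℝ) = ⟪grad g, h - g⟫ := real_inner_comm _ _
    rw [hE]
    simpa [h3] using h2
  -- gradient norm bounds
  have hgradnorm : ∀ g : H, ‖grad g‖ ≤ κ * (C0 + L * (κ * ‖g‖)) := by
    intro g
    rw [hgraddef]
    have h1 : ∀ z : X × Y, ‖φ' (z.2 : ℝ) ⟪g, K z.1⟫ • K z.1‖ ≤ κ * (C0 + L * (κ * ‖g‖)) := by
      intro z
      rw [norm_smul, Real.norm_eq_abs]
      have h2 := hφ'b z ⟪g, K z.1⟫
      have h3 : |⟪g, K z.1⟫| ≤ ‖g‖ * κ := by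
        calc |⟪g, K z.1⟫| ≤ ‖g‖ * ‖K z.1‖ := abs_real_inner_le_norm _ _
        _ ≤ ‖g‖ * κ := by nlinarith [norm_nonneg g, hκ z.1]
      have h4 := hκ z.1
      have h5 : (0:ℝ) ≤ ‖K z.1‖ := norm_nonneg _
      have h7 : |φ' (z.2 : ℝ) ⟪g, K z.1⟫| ≤ C0 + L * (‖g‖ * κ) := by
        have := mul_le_mul_of_nonneg_left h3 hL.le
        linarith
      calc |φ' (z.2 : ℝ) ⟪g, K z.1⟫| * ‖K z.1‖ ≤ (C0 + L * (‖g‖ * κ)) * κ := by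
            apply mul_le_mul h7 h4 h5
            positivity
      _ = κ * (C0 + L * (κ * ‖g‖)) := by ring
    calc ‖∫ z : X × Y, φ' (z.2 : ℝ) ⟪g, K z.1⟫ • K z.1 ∂ρ‖
        ≤ ∫ z : X × Y, ‖φ' (z.2 : ℝ) ⟪g, K z.1⟫ • K z.1‖ ∂ρ := norm_integral_le_integral_norm _
    _ ≤ ∫ _z : X × Y, κ * (C0 + L * (κ * ‖g‖)) ∂ρ :=
        integral_mono (hgint g).norm (integrable_const _) h1
    _ = κ * (C0 + L * (κ * ‖g‖)) := by rw [integral_const, probReal_univ]; simp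
  have hgradlip : ∀ g h : H, ‖grad g - grad h‖ ≤ L * κ ^ 2 * ‖g - h‖ := by
    intro g h
    have heq : grad g - grad h = ∫ z : X × Y,
        (φ' (z.2 : ℝ) ⟪g, K z.1⟫ - φ' (z.2 : ℝ) ⟪h, K z.1⟫) • K z.1 ∂ρ := by
      rw [hgraddef]
      rw [← integral_sub (hgint g) (hgint h)]
      congr 1
      ext z
      rw [sub_smul]
    rw [heq]
    have hintsub : Integrable (fun z : X × Y =>
        (φ' (z.2 : ℝ) ⟪g, K z.1⟫ - φ' (z.2 : ℝ) ⟪h, K z.1⟫) • K z.1) ρ := by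
      have := (hgint g).sub (hgint h)
      simpa [sub_smul, Pi.sub_def] using this
    have h1 : ∀ z : X × Y, ‖(φ' (z.2 : ℝ) ⟪g, K z.1⟫ - φ' (z.2 : ℝ) ⟪h, K z.1⟫) • K z.1‖
        ≤ L * κ ^ 2 * ‖g - h‖ := by
      intro z
      rw [norm_smul, Real.norm_eq_abs]
      have h2 := hφlip _ (hmemY z) ⟪g, K z.1⟫ ⟪h, K z.1⟫
      have h3 : |⟪g, K z.1⟫ - ⟪h, K z.1⟫| ≤ ‖g - h‖ * κ := by
        rw [show ⟪g, K z.1⟫ - ⟪h, K z.1⟫ = ⟪g - h, K z.1⟫ by rw [inner_sub_left]]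
        calc |⟪g - h, K z.1⟫| ≤ ‖g - h‖ * ‖K z.1‖ := abs_real_inner_le_norm _ _
        _ ≤ ‖g - h‖ * κ := by nlinarith [norm_nonneg (g - h), hκ z.1]
      have h4 := hκ z.1
      have h5 : (0:ℝ) ≤ ‖K z.1‖ := norm_nonneg _
      have h6 : |φ' (z.2 : ℝ) ⟪g, K z.1⟫ - φ' (z.2 : ℝ) ⟪h, K z.1⟫| ≤ L * (‖g - h‖ * κ) :=
        h2.trans (mul_le_mul_of_nonneg_left h3 hL.le)
      calc |φ' (z.2 : ℝ) ⟪g, K z.1⟫ - φ' (z.2 : ℝ) ⟪h, K z.1⟫| * ‖K z.1‖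
          ≤ (L * (‖g - h‖ * κ)) * κ := by
            apply mul_le_mul h6 h4 h5
            positivity
      _ = L * κ ^ 2 * ‖g - h‖ := by ring
    calc ‖∫ z : X × Y, (φ' (z.2 : ℝ) ⟪g, K z.1⟫ - φ' (z.2 : ℝ) ⟪h, K z.1⟫) • K z.1 ∂ρ‖
        ≤ ∫ z : X × Y, ‖(φ' (z.2 : ℝ) ⟪g, K z.1⟫ - φ' (z.2 : ℝ) ⟪h, K z.1⟫) • K z.1‖ ∂ρ :=
        norm_integral_le_integral_norm _
    _ ≤ ∫ _z : X × Y, L * κ ^ 2 * ‖g - h‖ ∂ρ :=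
        integral_mono hintsub.norm (integrable_const _) h1
    _ = L * κ ^ 2 * ‖g - h‖ := by rw [integral_const, probReal_univ]; simp
  have hgradcont : Continuous grad := by
    refine LipschitzWith.continuous (K := ⟨L * κ ^ 2, hLκ.le⟩) ?_
    refine LipschitzWith.of_dist_le_mul fun g h => ?_
    rw [dist_eq_norm, dist_eq_norm]
    exact_mod_cast hgradlip g h
  -- quadratic growth: ‖grad g‖² ≤ 4Lκ² (E g − E fH)
  have hgradsq : ∀ g : H, ‖grad g‖ ^ 2 ≤ 4 * (L * κ ^ 2) * (E g - E fH) := by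
    intro g
    set s : ℝ := 1 / (2 * (L * κ ^ 2)) with hsdef
    have hs : 0 < s := by positivity
    have h1 := hEup g (g - s • grad g)
    have e1 : g - s • grad g - g = -(s • grad g) := by abel
    have e2 : ⟪grad g, -(s • grad g)⟫ = -(s * ‖grad g‖ ^ 2) := by
      rw [inner_neg_right, real_inner_smul_right, real_inner_self_eq_norm_sq]
    have e3 : ‖-(s • grad g)‖ ^ 2 = s ^ 2 * ‖grad g‖ ^ 2 := by
      rw [norm_neg, norm_smul, Real.norm_eq_abs, mul_pow, sq_abs]
    rw [e1, e2, e3] at h1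
    have h2 := hmin (g - s • grad g)
    have hcalc : L * κ ^ 2 * (s ^ 2 * ‖grad g‖ ^ 2) = s * ‖grad g‖ ^ 2 / 2 := by
      rw [hsdef]; field_simp
    rw [hcalc] at h1
    have h3 : E fH ≤ E g - s * ‖grad g‖ ^ 2 / 2 := by linarith
    have h6 : s * ‖grad g‖ ^ 2 / 2 ≤ E g - E fH := by linarith
    have h7 : ‖grad g‖ ^ 2 = (4 * (L * κ ^ 2)) * (s * ‖grad g‖ ^ 2 / 2) := by
      rw [hsdef]
      field_simp
      ring
    calc ‖grad g‖ ^ 2 = (4 * (L * κ ^ 2)) * (s * ‖grad g‖ ^ 2 / 2) := h7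
    _ ≤ (4 * (L * κ ^ 2)) * (E g - E fH) := by
        apply mul_le_mul_of_nonneg_left h6
        positivity
  -- basic bounds on E
  have hEnonneg : ∀ g : H, 0 ≤ E g := by
    intro g
    rw [hE]
    exact integral_nonneg fun z => hφnonneg _ (hmemY z) _
  have hE0 : E (0 : H) ≤ M0 := by
    rw [hE]
    calc ∫ z : X × Y, φ (z.2 : ℝ) ⟪(0:H), K z.1⟫ ∂ρ
        ≤ ∫ _z : X × Y, M0 ∂ρ := by
          refine integral_mono (by simpa using hEint 0) (integrable_const _) fun z => ?_
          simpa using hM0 z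
    _ = M0 := by rw [integral_const, probReal_univ]; simp
  have hEbound : ∀ g : H, E g ≤ M0 + κ * C0 * ‖g‖ + L * κ ^ 2 * ‖g‖ ^ 2 := by
    intro g
    have h1 := hEup 0 g
    rw [sub_zero] at h1
    have h2 : ⟪grad 0, g⟫ ≤ κ * C0 * ‖g‖ := by
      have h3 := real_inner_le_norm (grad 0) g
      have h4 := hgradnorm 0
      rw [norm_zero] at h4
      nlinarith [norm_nonneg g, norm_nonneg (grad 0)]
    linarith
  -- continuity of E
  have hEcont : Continuous E := by
    rw [continuous_iff_continuousAt]
    intro g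
    have hb : ∀ h : H, |E h - E g| ≤ ‖grad g‖ * ‖h - g‖ + L * κ ^ 2 * ‖h - g‖ ^ 2 := by
      intro h
      have h1 := hElow g h
      have h2 := hEup g h
      have h3 := abs_le.mp (abs_real_inner_le_norm (grad g) (h - g))
      rw [abs_le]
      constructor
      · nlinarith [sq_nonneg ‖h - g‖, hLκ]
      · linarith
    have hten : Tendsto (fun h => E h - E g) (nhds g) (nhds 0) := by
      apply squeeze_zero_norm (fun h => by simpa [Real.norm_eq_abs] using hb h)
      have hcont : Continuous fun h : H => ‖grad g‖ * ‖h - g‖ + L * κ ^ 2 * ‖h - g‖ ^ 2 := by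
        fun_prop
      have h0 : ‖grad g‖ * ‖g - g‖ + L * κ ^ 2 * ‖g - g‖ ^ 2 = 0 := by simp
      simpa [h0] using hcont.tendsto g
    have := hten.add (tendsto_const_nhds (x := E g))
    exact (by simpa using this : Tendsto (fun x => E x) (nhds g) (nhds (E g)))
  -- filtration
  set F : ℕ → MeasurableSpace Ω := fun n =>
    ⨆ i ∈ Set.Iio n, MeasurableSpace.comap (zs i) inferInstance with hFdef
  have hFle : ∀ n, F n ≤ (inferInstance : MeasurableSpace Ω) := fun n =>
    iSup₂_le fun i _ => (hzmeas i).comap_le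
  -- the iterates are bounded and adapted
  have hiter : ∀ t, 1 ≤ t → ∃ B : ℝ, 0 ≤ B ∧ (∀ ω, ‖f t ω‖ ≤ B) ∧ Measurable[F t] (f t) := by
    intro t ht
    induction t, ht using Nat.le_induction with
    | base =>
      refine ⟨0, le_rfl, fun ω => by simp [hf1 ω], ?_⟩
      have heq : f 1 = fun _ : Ω => (0 : H) := funext hf1
      rw [heq]
      exact measurable_const
    | succ t ht ih =>
      obtain ⟨B, hB0, hBb, hBm⟩ := ih
      have hle : F t ≤ F (t + 1) :=
        biSup_mono fun i hi => Set.mem_Iio.mpr ((Set.mem_Iio.mp hi).trans (Nat.lt_succ_self t))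
      have hm1 : Measurable[F (t + 1)] (f t) := hBm.mono hle le_rfl
      have hcom : MeasurableSpace.comap (zs t) inferInstance ≤ F (t + 1) :=
        le_biSup (fun i => MeasurableSpace.comap (zs i) inferInstance)
          (Set.mem_Iio.mpr (Nat.lt_succ_self t))
      have hm2 : Measurable[F (t + 1)] (zs t) :=
        (Measurable.of_comap_le le_rfl).mono hcom le_rfl
      have hx : Measurable[F (t + 1)] fun ω => (zs t ω).1 := measurable_fst.comp hm2
      have hy : Measurable[F (t + 1)] fun ω => ((zs t ω).2 : ℝ) :=
        measurable_subtype_coe.comp (measurable_snd.comp hm2)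
      have hK' : Measurable[F (t + 1)] fun ω => K (zs t ω).1 := hKmeas.comp hx
      have hin : Measurable[F (t + 1)] fun ω => (⟪f t ω, K (zs t ω).1⟫ : ℝ) := hm1.inner hK'
      have hphi : Measurable[F (t + 1)] fun ω => φ' ((zs t ω).2 : ℝ) ⟪f t ω, K (zs t ω).1⟫ :=
        hφ'meas.comp (hy.prodMk hin)
      have hmeasnext : Measurable[F (t + 1)] (f (t + 1)) := by
        have heqf : f (t + 1) = fun ω => f t ω -
            (η t * φ' ((zs t ω).2 : ℝ) ⟪f t ω, K (zs t ω).1⟫) • K (zs t ω).1 :=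
          funext (hfrec t ht)
        rw [heqf]
        exact hm1.sub ((measurable_const.mul hphi).smul hK')
      refine ⟨B + η t * ((C0 + L * (κ * B)) * κ), ?_, ?_, hmeasnext⟩
      · have h0 : 0 ≤ (C0 + L * (κ * B)) * κ := by positivity
        nlinarith [(hηpos t).le]
      · intro ω
        rw [hfrec t ht ω]
        have h3 : |(⟪f t ω, K (zs t ω).1⟫ : ℝ)| ≤ κ * B := by
          calc |(⟪f t ω, K (zs t ω).1⟫ : ℝ)| ≤ ‖f t ω‖ * ‖K (zs t ω).1‖ :=
              abs_real_inner_le_norm _ _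
          _ ≤ κ * B := by nlinarith [norm_nonneg (f t ω), hκ (zs t ω).1, hBb ω, hκpos.le]
        have h4 : |φ' ((zs t ω).2 : ℝ) ⟪f t ω, K (zs t ω).1⟫| ≤ C0 + L * (κ * B) := by
          have h5 := hφ'b (zs t ω) ⟪f t ω, K (zs t ω).1⟫
          have h6 := mul_le_mul_of_nonneg_left h3 hL.le
          linarith
        have h1 : ‖(η t * φ' ((zs t ω).2 : ℝ) ⟪f t ω, K (zs t ω).1⟫) • K (zs t ω).1‖
            ≤ η t * ((C0 + L * (κ * B)) * κ) := by
          rw [norm_smul, Real.norm_eq_abs, abs_mul, abs_of_pos (hηpos t), mul_assoc]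
          have h8 : |φ' ((zs t ω).2 : ℝ) ⟪f t ω, K (zs t ω).1⟫| * ‖K (zs t ω).1‖
              ≤ (C0 + L * (κ * B)) * κ :=
            mul_le_mul h4 (hκ (zs t ω).1) (norm_nonneg _) (by positivity)
          exact mul_le_mul_of_nonneg_left h8 (hηpos t).le
        have h9 := norm_sub_le (f t ω)
          ((η t * φ' ((zs t ω).2 : ℝ) ⟪f t ω, K (zs t ω).1⟫) • K (zs t ω).1)
        linarith [hBb ω]
  -- independence of f t and zs t
  have hindepf : ∀ t, 1 ≤ t → IndepFun (f t) (zs t) P := by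
    intro t ht
    obtain ⟨B, _, _, hm⟩ := hiter t ht
    have h1 : ProbabilityTheory.Indep (F t)
        (⨆ i ∈ ({t} : Set ℕ), MeasurableSpace.comap (zs i) inferInstance) P := by
      rw [hFdef]
      exact indep_iSup_of_disjoint (fun i => (hzmeas i).comap_le) hziid.iIndep
        (by simp [Set.disjoint_singleton_right])
    have h2 : (⨆ i ∈ ({t} : Set ℕ), MeasurableSpace.comap (zs i) inferInstance)
        = MeasurableSpace.comap (zs t) inferInstance := by simp
    rw [h2] at h1
    exact ogd_indep_mono h1 hm.comap_le le_rfl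
  -- integrability of the expected risks
  have hEfint : ∀ t, 1 ≤ t → Integrable (fun ω => E (f t ω)) P := by
    intro t ht
    obtain ⟨B, hB0, hBb, hBm⟩ := hiter t ht
    have hft : Measurable (f t) := hBm.mono (hFle t) le_rfl
    have hm : Measurable fun ω => E (f t ω) := hEcont.measurable.comp hft
    refine Integrable.mono' (integrable_const (M0 + κ * C0 * B + L * κ ^ 2 * B ^ 2))
      hm.aestronglyMeasurable ?_
    filter_upwards with ω
    rw [Real.norm_eq_abs, abs_of_nonneg (hEnonneg _)]
    have h1 := hEbound (f t ω)
    have h2 := hBb ω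
    have h3 : κ * C0 * ‖f t ω‖ ≤ κ * C0 * B :=
      mul_le_mul_of_nonneg_left h2 (by positivity)
    have h4 : ‖f t ω‖ ^ 2 ≤ B ^ 2 := by nlinarith [norm_nonneg (f t ω)]
    have h5 : L * κ ^ 2 * ‖f t ω‖ ^ 2 ≤ L * κ ^ 2 * B ^ 2 :=
      mul_le_mul_of_nonneg_left h4 hLκ.le
    linarith
  have hEfH_le : ∀ t, 1 ≤ t → E fH ≤ ∫ ω, E (f t ω) ∂P := by
    intro t ht
    have h1 : ∫ _ω : Ω, E fH ∂P ≤ ∫ ω, E (f t ω) ∂P :=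
      integral_mono (integrable_const _) (hEfint t ht) fun ω => hmin _
    rw [integral_const, probReal_univ] at h1
    simpa using h1
  set c : ℝ := 4 * (L * κ ^ 2) with hcdef
  have hcpos : 0 < c := by rw [hcdef]; positivity
  -- the key one-step inequality
  have hkey : ∀ t, 1 ≤ t →
      (∫ ω, E (f t ω) ∂P - E fH) - c * η t * (∫ ω, E (f t ω) ∂P - E fH)
        ≤ ∫ ω, E (f (t + 1) ω) ∂P - E fH := by
    intro t ht
    obtain ⟨B, hB0, hBb, hBm⟩ := hiter t ht
    have hft : Measurable (f t) := hBm.mono (hFle t) le_rfl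
    have hDB : ∀ v : H, ‖v‖ ≤ B → ‖grad v‖ ≤ κ * (C0 + L * (κ * B)) := by
      intro v hv
      refine (hgradnorm v).trans ?_
      nlinarith [hκpos.le, hL.le]
    set CB : ℝ := (C0 + L * (κ * B)) * (κ * (C0 + L * (κ * B)) * κ) with hCB
    have hGb : ∀ (v : H) (z : X × Y), ‖v‖ ≤ B →
        |φ' (z.2 : ℝ) ⟪v, K z.1⟫ * ⟪grad v, K z.1⟫| ≤ CB := by
      intro v z hv
      rw [abs_mul]
      have h3 : |(⟪v, K z.1⟫ : ℝ)| ≤ κ * B := by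
        calc |(⟪v, K z.1⟫ : ℝ)| ≤ ‖v‖ * ‖K z.1‖ := abs_real_inner_le_norm _ _
        _ ≤ κ * B := by nlinarith [norm_nonneg v, hκ z.1, hκpos.le]
      have h4 : |φ' (z.2 : ℝ) ⟪v, K z.1⟫| ≤ C0 + L * (κ * B) := by
        have h5 := hφ'b z ⟪v, K z.1⟫
        have h6 := mul_le_mul_of_nonneg_left h3 hL.le
        linarith
      have h7 : |(⟪grad v, K z.1⟫ : ℝ)| ≤ κ * (C0 + L * (κ * B)) * κ := by
        calc |(⟪grad v, K z.1⟫ : ℝ)| ≤ ‖grad v‖ * ‖K z.1‖ := abs_real_inner_le_norm _ _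
        _ ≤ κ * (C0 + L * (κ * B)) * κ := by
            apply mul_le_mul (hDB v hv) (hκ z.1) (norm_nonneg _)
            positivity
      rw [hCB]
      apply mul_le_mul h4 h7 (abs_nonneg _)
      positivity
    set q : Ω → ℝ := fun ω => φ' ((zs t ω).2 : ℝ) ⟪f t ω, K (zs t ω).1⟫ *
      ⟪grad (f t ω), K (zs t ω).1⟫ with hq
    have hqmeas : Measurable q := by
      apply Measurable.mul
      · exact hφ'meas.comp ((measurable_subtype_coe.comp
          (measurable_snd.comp (hzmeas t))).prodMk
          (hft.inner (hKmeas.comp (measurable_fst.comp (hzmeas t)))))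
      · exact (hgradcont.measurable.comp hft).inner (hKmeas.comp (measurable_fst.comp (hzmeas t)))
    have hqint : Integrable q P := by
      refine Integrable.mono' (integrable_const CB) hqmeas.aestronglyMeasurable ?_
      filter_upwards with ω
      rw [Real.norm_eq_abs]
      exact hGb (f t ω) (zs t ω) (hBb ω)
    -- pointwise convexity step
    have hpt : ∀ ω, E (f t ω) - η t * q ω ≤ E (f (t + 1) ω) := by
      intro ω
      have h1 := hElow (f t ω) (f (t + 1) ω)
      rw [hfrec t ht ω] at h1 ⊢
      have e1 : f t ω - (η t * φ' ((zs t ω).2 : ℝ) ⟪f t ω, K (zs t ω).1⟫) • K (zs t ω).1 - f t ω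
          = -((η t * φ' ((zs t ω).2 : ℝ) ⟪f t ω, K (zs t ω).1⟫) • K (zs t ω).1) := by abel
      rw [e1, inner_neg_right, real_inner_smul_right] at h1
      have e2 : (η t * φ' ((zs t ω).2 : ℝ) ⟪f t ω, K (zs t ω).1⟫) *
          ⟪grad (f t ω), K (zs t ω).1⟫ = η t * q ω := by rw [hq]; ring
      linarith [h1, e2.symm.le, e2.le]
    -- integrate the pointwise step
    have hint2 : Integrable (fun ω => E (f t ω) - η t * q ω) P :=
      (hEfint t ht).sub (hqint.const_mul _)
    have h3 := integral_mono hint2 (hEfint (t + 1) (by omega)) hpt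
    rw [integral_sub (hEfint t ht) (hqint.const_mul _), integral_const_mul] at h3
    -- the expectation of q equals the expectation of ‖grad (f t)‖²
    have hid : ∫ ω, q ω ∂P = ∫ ω, ‖grad (f t ω)‖ ^ 2 ∂P := by
      set μt := Measure.map (f t) P with hμt
      haveI : IsProbabilityMeasure μt := Measure.isProbabilityMeasure_map hft.aemeasurable
      set G : H × (X × Y) → ℝ :=
        fun p => φ' ((p.2.2 : ℝ)) ⟪p.1, K p.2.1⟫ * ⟪grad p.1, K p.2.1⟫ with hG
      have hGmeas : Measurable G := by
        apply Measurable.mul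
        · exact hφ'meas.comp ((measurable_subtype_coe.comp
            (measurable_snd.comp measurable_snd)).prodMk
            (measurable_fst.inner (hKmeas.comp (measurable_fst.comp measurable_snd))))
        · exact (hgradcont.measurable.comp measurable_fst).inner
            (hKmeas.comp (measurable_fst.comp measurable_snd))
      have hmap : Measure.map (fun ω => (f t ω, zs t ω)) P = μt.prod ρ := by
        rw [hμt, ← hzdist t]
        exact (indepFun_iff_map_prod_eq_prod_map_map hft.aemeasurable
          (hzmeas t).aemeasurable).mp (hindepf t ht)
      have hclosed : MeasurableSet {v : H | ‖v‖ ≤ B} :=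
        (isClosed_le continuous_norm continuous_const).measurableSet
      have hnull : μt ({v : H | ‖v‖ ≤ B}ᶜ) = 0 := by
        rw [hμt, Measure.map_apply hft hclosed.compl]
        have hpre : (f t) ⁻¹' ({v : H | ‖v‖ ≤ B}ᶜ) = ∅ := by
          ext ω
          simp [hBb ω]
        rw [hpre]
        simp
      have haeB : ∀ᵐ p ∂(μt.prod ρ), ‖p.1‖ ≤ B := by
        rw [ae_iff]
        have hset : {p : H × (X × Y) | ¬ ‖p.1‖ ≤ B}
            = ({v : H | ‖v‖ ≤ B}ᶜ) ×ˢ (Set.univ : Set (X × Y)) := by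
          ext p
          simp
        rw [hset, Measure.prod_prod, hnull, zero_mul]
      have hGint : Integrable G (μt.prod ρ) := by
        refine Integrable.mono' (integrable_const CB) hGmeas.aestronglyMeasurable ?_
        filter_upwards [haeB] with p hp
        rw [Real.norm_eq_abs, hG]
        exact hGb p.1 p.2 hp
      have hgradsqcont : Continuous fun v : H => ‖grad v‖ ^ 2 := (hgradcont.norm).pow 2
      calc ∫ ω, q ω ∂P
          = ∫ p, G p ∂(Measure.map (fun ω => (f t ω, zs t ω)) P) := by
            rw [integral_map (hft.aemeasurable.prodMk (hzmeas t).aemeasurable)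
              hGmeas.aestronglyMeasurable]
      _ = ∫ p, G p ∂(μt.prod ρ) := by rw [hmap]
      _ = ∫ v, ∫ z, G (v, z) ∂ρ ∂μt := integral_prod G hGint
      _ = ∫ v, ‖grad v‖ ^ 2 ∂μt := by
            refine integral_congr_ae (Filter.Eventually.of_forall fun v => ?_)
            rw [hG]
            exact (hinner_int_eq v (grad v)).trans (real_inner_self_eq_norm_sq _)
      _ = ∫ ω, ‖grad (f t ω)‖ ^ 2 ∂P := by
            rw [hμt, integral_map hft.aemeasurable hgradsqcont.aestronglyMeasurable]
    -- bound the gradient-norm integral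
    have hgint2 : Integrable (fun ω => ‖grad (f t ω)‖ ^ 2) P := by
      refine Integrable.mono' (integrable_const ((κ * (C0 + L * (κ * B))) ^ 2))
        ((((hgradcont.norm).pow 2).measurable.comp hft).aestronglyMeasurable) ?_
      filter_upwards with ω
      rw [Real.norm_eq_abs, abs_of_nonneg (by positivity)]
      have h5 := hDB (f t ω) (hBb ω)
      nlinarith [norm_nonneg (grad (f t ω))]
    have h4 : ∫ ω, ‖grad (f t ω)‖ ^ 2 ∂P ≤ c * (∫ ω, E (f t ω) ∂P - E fH) := by
      have h5 : ∫ ω, ‖grad (f t ω)‖ ^ 2 ∂P ≤ ∫ ω, c * (E (f t ω) - E fH) ∂P := by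
        refine integral_mono hgint2 (((hEfint t ht).sub (integrable_const _)).const_mul c) ?_
        intro ω
        exact hgradsq (f t ω)
      rw [integral_const_mul, integral_sub (hEfint t ht) (integrable_const _),
        integral_const, probReal_univ] at h5
      simpa using h5
    have hq_le : ∫ ω, q ω ∂P ≤ c * (∫ ω, E (f t ω) ∂P - E fH) := hid ▸ h4
    have hη := (hηpos t).le
    nlinarith [h3, mul_le_mul_of_nonneg_left hq_le hη]
  -- positivity of the expected excess risk
  have hEf1 : (∫ ω, E (f 1 ω) ∂P) = E (0 : H) := by
    have heq : (fun ω => E (f 1 ω)) = fun _ω : Ω => E (0 : H) := funext fun ω => by rw [hf1]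
    rw [heq, integral_const, probReal_univ]
    simp
  have hb1pos : 0 < ∫ ω, E (f 1 ω) ∂P - E fH := by
    rw [hEf1]
    have h1 : E fH ≤ E 0 := hmin 0
    have h2 : E (0 : H) ≠ E fH := by
      have h3 := hne ω0
      rwa [hf1 ω0] at h3
    rcases h1.lt_or_eq with h | h
    · linarith
    · exact absurd h.symm h2
  have hcη : ∀ t, 1 ≤ t → c * η t ≤ 2 / 3 := by
    intro t ht
    have h1 := hηbound t ht
    have h2 : c * η t ≤ c * (1 / (6 * L * κ ^ 2)) := mul_le_mul_of_nonneg_left h1 hcpos.le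
    have h3 : c * (1 / (6 * L * κ ^ 2)) = 2 / 3 := by
      rw [hcdef]
      field_simp
      ring
    linarith
  have hbpos : ∀ t, 1 ≤ t → 0 < ∫ ω, E (f t ω) ∂P - E fH := by
    intro t ht
    induction t, ht using Nat.le_induction with
    | base => exact hb1pos
    | succ t ht ih =>
      have h1 := hkey t ht
      have h2 := hcη t ht
      have h3 := mul_le_mul_of_nonneg_right h2 ih.le
      nlinarith
  -- conclusion: if the sums were bounded, the excess risk would stay bounded away from 0
  by_contra hnot
  set S : ℕ → ℝ := fun T => ∑ t ∈ Finset.Icc 1 T, η t with hSdef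
  have hSmono : Monotone S := by
    intro a b' hab
    apply Finset.sum_le_sum_of_subset_of_nonneg (Finset.Icc_subset_Icc_right hab)
    exact fun i _ _ => (hηpos i).le
  have hbdd : BddAbove (Set.range S) := by
    by_contra hbd
    exact hnot (tendsto_atTop_atTop_of_monotone' hSmono hbd)
  have hlim : Tendsto S atTop (nhds (⨆ T, S T)) := tendsto_atTop_ciSup hSmono hbdd
  set Ssup : ℝ := ⨆ T, S T with hSsup
  have hev : ∀ᶠ T in atTop, Ssup - 1 / (2 * c) < S T := by
    have h1 : Ssup - 1 / (2 * c) < Ssup := by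
      have h2 : (0:ℝ) < 1 / (2 * c) := by positivity
      linarith
    exact hlim.eventually (eventually_gt_nhds h1)
  obtain ⟨T1, hT1a, hT1b⟩ : ∃ T1, 1 ≤ T1 ∧ Ssup - 1 / (2 * c) < S T1 := by
    obtain ⟨T, hT⟩ := (hev.and (eventually_ge_atTop 1)).exists
    exact ⟨T, hT.2, hT.1⟩
  have hSle : ∀ T, S T ≤ Ssup := fun T => le_ciSup hbdd T
  have htail : ∀ T, T1 ≤ T → ∑ t ∈ Finset.Ico (T1 + 1) (T + 1), η t ≤ 1 / (2 * c) := by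
    intro T hT
    have h1 : S T1 + ∑ t ∈ Finset.Ico (T1 + 1) (T + 1), η t = S T := by
      rw [hSdef]
      simp only [← Finset.Ico_add_one_right_eq_Icc]
      exact Finset.sum_Ico_consecutive η (by omega) (by omega)
    have h2 := hSle T
    linarith
  set b0 : ℝ := ∫ ω, E (f (T1 + 1) ω) ∂P - E fH with hb0
  have hb0pos : 0 < b0 := hbpos (T1 + 1) (by omega)
  have hlower : ∀ T, T1 ≤ T →
      b0 * (1 - c * ∑ t ∈ Finset.Ico (T1 + 1) (T + 1), η t)
        ≤ ∫ ω, E (f (T + 1) ω) ∂P - E fH := by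
    intro T hT
    induction T, hT using Nat.le_induction with
    | base =>
      rw [hb0]
      simp
    | succ T hT ih =>
      have hsum : ∑ t ∈ Finset.Ico (T1 + 1) (T + 1 + 1), η t
          = (∑ t ∈ Finset.Ico (T1 + 1) (T + 1), η t) + η (T + 1) :=
        Finset.sum_Ico_succ_top (by omega) η
      have hk := hkey (T + 1) (by omega)
      have hc2 := hcη (T + 1) (by omega)
      have hη2 := (hηpos (T + 1)).le
      have hbT := hbpos (T + 1) (by omega)
      have hsum0 : 0 ≤ ∑ t ∈ Finset.Ico (T1 + 1) (T + 1), η t :=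
        Finset.sum_nonneg fun i _ => (hηpos i).le
      rw [hsum]
      have hv0 : 0 ≤ 1 - c * η (T + 1) := by linarith
      have hmm := mul_le_mul_of_nonneg_left ih hv0
      nlinarith [mul_nonneg (mul_nonneg hb0pos.le (mul_nonneg hcpos.le hsum0))
        (mul_nonneg hcpos.le hη2)]
  have hfin : ∀ T, T1 ≤ T → b0 / 2 ≤ ∫ ω, E (f (T + 1) ω) ∂P - E fH := by
    intro T hT
    have h1 := hlower T hT
    have h2 := htail T hT
    have hceq : c * (1 / (2 * c)) = 1 / 2 := by
      field_simp
    have h3 : c * ∑ t ∈ Finset.Ico (T1 + 1) (T + 1), η t ≤ 1 / 2 := by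
      have h4 := mul_le_mul_of_nonneg_left h2 hcpos.le
      linarith
    nlinarith [mul_le_mul_of_nonneg_left (by linarith : (1:ℝ) / 2 ≤ 1 -
      c * ∑ t ∈ Finset.Ico (T1 + 1) (T + 1), η t) hb0pos.le]
  have hto0 : Tendsto (fun t => ∫ ω, E (f t ω) ∂P - E fH) atTop (nhds 0) := by
    have h1 := hconv.sub_const (E fH)
    simpa using h1
  have hev2 : ∀ᶠ t in atTop, ∫ ω, E (f t ω) ∂P - E fH < b0 / 2 :=
    hto0.eventually (eventually_lt_nhds (by linarith : (0:ℝ) < b0 / 2))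
  obtain ⟨t2, ht2⟩ := (hev2.and (eventually_ge_atTop (T1 + 1))).exists
  have h5 := hfin (t2 - 1) (by omega)
  rw [show t2 - 1 + 1 = t2 by omega] at h5
  linarith [ht2.1]
end

section
/- Let {f_t}_{t∈ℕ} be the online gradient descent iterates and suppose Assumption 1 holds. If lim_{t→∞} η_t = 0 and ∑_{t=1}^∞ η_t = ∞, then (i) liminf_{t→∞} (𝔼[E(f_t)] − E(f_H)) = 0, and (ii) lim_{T→∞} (∑_{t=1}^T η_t)^{-1} · ∑_{t=1}^T η_t (𝔼[E(f_t)] − E(f_H)) = 0. -/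
open MeasureTheory ProbabilityTheory Filter Real
open scoped RealInnerProductSpace

set_option maxHeartbeats 1000000



/-- tangent line inequality for convex differentiable functions on ℝ -/
lemma convex_tangent_le {g : ℝ → ℝ} {g' : ℝ → ℝ} (hconv : ConvexOn ℝ Set.univ g)
    (hderiv : ∀ s : ℝ, HasDerivAt g (g' s) s) (s t : ℝ) :
    g s + g' s * (t - s) ≤ g t := by
  rcases lt_trichotomy s t with h | h | h
  · have := hconv.le_slope_of_hasDerivAt (Set.mem_univ s) (Set.mem_univ t) h (hderiv s)
    rw [slope_def_field] at this
    have h' : 0 < t - s := by linarith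
    have := (le_div_iff₀ h').mp this
    nlinarith
  · simp [h]
  · have := hconv.slope_le_of_hasDerivAt (Set.mem_univ t) (Set.mem_univ s) h (hderiv s)
    rw [slope_def_field] at this
    have h' : 0 < s - t := by linarith
    have := (div_le_iff₀ h').mp this
    nlinarith

/-- self-bounding property: (g')² ≤ 4 L^(2/(1+α)) (1 + g) for nonneg convex g with
Hölder continuous derivative. -/
lemma selfbound_sq {L α : ℝ} (hL : 0 < L) (hα : 0 < α) (hα1 : α ≤ 1)
    {g g' : ℝ → ℝ} (hnn : ∀ s : ℝ, 0 ≤ g s)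
    (htan : ∀ s t : ℝ, g s + g' s * (t - s) ≤ g t)
    (hhold : ∀ s t : ℝ, |g' s - g' t| ≤ L * |s - t| ^ α) (s : ℝ) :
    (g' s) ^ 2 ≤ 4 * L ^ (2 / (1 + α)) * (1 + g s) := by
  have hLpos : (0:ℝ) < L ^ (2 / (1 + α)) := Real.rpow_pos_of_pos hL _
  have hgs := hnn s
  rcases eq_or_ne (g' s) 0 with h0 | h0
  · rw [h0]; nlinarith
  -- set d = |g' s| > 0
  set d : ℝ := |g' s| with hd
  have hdpos : 0 < d := abs_pos.mpr h0
  set h : ℝ := (d / (2 * L)) ^ (1 / α) with hh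
  have hdL : 0 < d / (2 * L) := by positivity
  have hhpos : 0 < h := Real.rpow_pos_of_pos hdL _
  have hαα : 1 / α * α = 1 := by field_simp; try ring
  have hhα : L * h ^ α = d / 2 := by
    rw [hh, ← Real.rpow_mul hdL.le, hαα, Real.rpow_one]
    field_simp; try ring
  -- main bound : (d/2) * h ≤ g s
  have hkey : d / 2 * h ≤ g s := by
    rcases h0.lt_or_gt with hneg | hpos
    · -- g' s < 0, use m = s + h
      have hdm : d = -(g' s) := by rw [hd, abs_of_neg hneg]
      have h1 := hhold (s + h) s
      have h2 : |s + h - s| = h := by rw [add_sub_cancel_left, abs_of_pos hhpos]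
      rw [h2] at h1
      have h3 : g' (s + h) ≤ -(d / 2) := by
        have := (abs_le.mp h1).2
        rw [hhα] at h1
        have := (abs_le.mp h1).2
        linarith [hdm]
      have h4 := htan (s + h) s
      have h5 : s - (s + h) = -h := by ring
      rw [h5] at h4
      nlinarith [hnn (s + h)]
    · -- g' s > 0, use m = s - h
      have hdm : d = g' s := by rw [hd, abs_of_pos hpos]
      have h1 := hhold (s - h) s
      have h2 : |s - h - s| = h := by rw [sub_sub_cancel_left, abs_neg, abs_of_pos hhpos]
      rw [h2, hhα] at h1
      have h3 : d / 2 ≤ g' (s - h) := by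
        have := (abs_le.mp h1).1
        linarith [hdm]
      have h4 := htan (s - h) s
      have h5 : s - (s - h) = h := by ring
      rw [h5] at h4
      nlinarith [hnn (s - h)]
  -- convert to d ^ (1 + 1/α) ≤ 2 * (2*L)^(1/α) * g s
  have h2L : (0:ℝ) < 2 * L := by linarith
  have hdiv : (d / (2 * L)) ^ (1 / α) = d ^ (1 / α) / (2 * L) ^ (1 / α) :=
    Real.div_rpow hdpos.le h2L.le (1/α)
  have hpow : d ^ ((1:ℝ) + 1 / α) = d * d ^ (1 / α) := by
    rw [Real.rpow_add hdpos, Real.rpow_one]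
  have h2Lr : (0:ℝ) < (2 * L) ^ (1 / α) := Real.rpow_pos_of_pos h2L _
  have hkey2 : d ^ ((1:ℝ) + 1 / α) ≤ 2 * (2 * L) ^ (1 / α) * g s := by
    rw [hpow]
    rw [hh, hdiv] at hkey
    calc d * d ^ (1 / α) = 2 * (2 * L) ^ (1 / α) * (d / 2 * (d ^ (1 / α) / (2 * L) ^ (1 / α))) := by
          field_simp; try ring
    _ ≤ 2 * (2 * L) ^ (1 / α) * g s := by
          apply mul_le_mul_of_nonneg_left hkey (by positivity)
  set β : ℝ := 2 * α / (1 + α) with hβ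
  have hβpos : 0 < β := by rw [hβ]; positivity
  have hβ1 : β ≤ 1 := by
    rw [hβ, div_le_one (by linarith)]; linarith
  have hexp : ((1:ℝ) + 1 / α) * β = 2 := by rw [hβ]; field_simp; try ring
  have hd2 : d ^ (2:ℝ) = (d ^ ((1:ℝ) + 1 / α)) ^ β := by
    rw [← Real.rpow_mul hdpos.le, hexp]
  have hmono : (d ^ ((1:ℝ) + 1 / α)) ^ β ≤ (2 * (2 * L) ^ (1 / α) * g s) ^ β :=
    Real.rpow_le_rpow (Real.rpow_nonneg hdpos.le _) hkey2 hβpos.le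
  have hsplit : (2 * (2 * L) ^ (1 / α) * g s) ^ β
      = 2 ^ β * ((2 * L) ^ (1 / α)) ^ β * g s ^ β := by
    rw [Real.mul_rpow (by positivity) hgs, Real.mul_rpow (by norm_num) h2Lr.le]
  have h2L2 : ((2 * L) ^ (1 / α)) ^ β = 2 ^ (2 / (1 + α)) * L ^ (2 / (1 + α)) := by
    rw [← Real.rpow_mul h2L.le]
    have : 1 / α * β = 2 / (1 + α) := by rw [hβ]; field_simp; try ring
    rw [this, Real.mul_rpow (by norm_num) hL.le]
  have h4eq : 2 ^ β * (2 ^ (2 / (1 + α)) : ℝ) = 4 := by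
    rw [← Real.rpow_add (by norm_num)]
    have : β + 2 / (1 + α) = 2 := by rw [hβ]; field_simp; try ring
    rw [this, show (2:ℝ) = ((2:ℕ):ℝ) by norm_num, Real.rpow_natCast]
    norm_num
  have hgβ : g s ^ β ≤ 1 + g s := by
    rcases le_total (g s) 1 with hle | hge
    · have := Real.rpow_le_one hgs hle hβpos.le
      linarith
    · have := Real.rpow_le_rpow_of_exponent_le hge hβ1
      rw [Real.rpow_one] at this
      linarith
  have hfin : d ^ (2:ℝ) ≤ 4 * L ^ (2 / (1 + α)) * g s ^ β := by
    rw [hd2]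
    calc (d ^ ((1:ℝ) + 1 / α)) ^ β ≤ (2 * (2 * L) ^ (1 / α) * g s) ^ β := hmono
    _ = 2 ^ β * ((2 * L) ^ (1 / α)) ^ β * g s ^ β := hsplit
    _ = 4 * L ^ (2 / (1 + α)) * g s ^ β := by rw [h2L2]; rw [← h4eq]; ring
  have hd2' : (g' s) ^ 2 = d ^ (2:ℝ) := by
    rw [show (2:ℝ) = ((2:ℕ):ℝ) by norm_num, Real.rpow_natCast, hd, sq_abs]
  rw [hd2']
  calc d ^ (2:ℝ) ≤ 4 * L ^ (2 / (1 + α)) * g s ^ β := hfin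
  _ ≤ 4 * L ^ (2 / (1 + α)) * (1 + g s) := by
      apply mul_le_mul_of_nonneg_left hgβ (by positivity)


private lemma sum_split_aux (g : ℕ → ℝ) (N T : ℕ) (h : N ≤ T) :
    ∑ t ∈ Finset.Icc 1 T, g t
      = ∑ t ∈ Finset.Icc 1 N, g t + ∑ t ∈ Finset.Icc (N + 1) T, g t := by
  induction T, h using Nat.le_induction with
  | base => simp [Finset.Icc_eq_empty (by omega : ¬ N + 1 ≤ N)]
  | succ T hT ih =>
      rw [Finset.sum_Icc_succ_top (by omega), Finset.sum_Icc_succ_top (by omega), ih]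
      ring

/-- deterministic recursion lemma -/
lemma det_recursion (η r a : ℕ → ℝ) (A B : ℝ) (hA : 0 ≤ A) (hB : 0 ≤ B)
    (hηpos : ∀ t, 0 < η t) (hr : ∀ t, 1 ≤ t → 0 ≤ r t) (ha : ∀ t, 0 ≤ a t)
    (hrec : ∀ t, 1 ≤ t → a (t + 1) ≤ a t - 2 * η t * r t + η t ^ 2 * (A + B * r t))
    (hη0 : Tendsto η atTop (nhds 0))
    (hdiv : Tendsto (fun T => ∑ t ∈ Finset.Icc 1 T, η t) atTop atTop) :
    liminf r atTop = 0 ∧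
      Tendsto (fun T => (∑ t ∈ Finset.Icc 1 T, η t)⁻¹ * ∑ t ∈ Finset.Icc 1 T, η t * r t)
        atTop (nhds 0) := by
  set S : ℕ → ℝ := fun T => ∑ t ∈ Finset.Icc 1 T, η t with hS
  set u : ℕ → ℝ := fun T => (S T)⁻¹ * ∑ t ∈ Finset.Icc 1 T, η t * r t with hu
  have hSpos : ∀ T, 1 ≤ T → 0 < S T := by
    intro T hT
    apply Finset.sum_pos (fun t _ => hηpos t)
    exact ⟨1, Finset.mem_Icc.mpr ⟨le_refl 1, hT⟩⟩
  have hSmono : ∀ N T, N ≤ T → S N ≤ S T := by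
    intro N T h
    apply Finset.sum_le_sum_of_subset_of_nonneg
    · exact Finset.Icc_subset_Icc_right h
    · exact fun t _ _ => (hηpos t).le
  have hu_nonneg : ∀ T, 1 ≤ T → 0 ≤ u T := by
    intro T hT
    apply mul_nonneg (inv_nonneg.mpr (hSpos T hT).le)
    apply Finset.sum_nonneg
    intro t ht
    rw [Finset.mem_Icc] at ht
    exact mul_nonneg (hηpos t).le (hr t ht.1)
  -- main: for every ε > 0, eventually u T ≤ ε
  have hmain : ∀ ε : ℝ, 0 < ε → ∀ᶠ T in atTop, u T ≤ ε := by
    intro ε hε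
    -- choose N ≥ 1 with B * η t ≤ 1 and A * η t ≤ ε/2 for all t ≥ N
    have h1 : ∀ᶠ t in atTop, B * η t ≤ 1 := by
      have := (hη0.const_mul B)
      rw [mul_zero] at this
      exact this.eventually_le_const one_pos
    have h2 : ∀ᶠ t in atTop, A * η t ≤ ε / 2 := by
      have := (hη0.const_mul A)
      rw [mul_zero] at this
      exact this.eventually_le_const (by positivity)
    obtain ⟨N, hN⟩ := ((h1.and h2).and (eventually_ge_atTop 1)).exists_forall_of_atTop
    have hN1 : 1 ≤ N := (hN N le_rfl).2
    -- per-step bound : for t ≥ N, η t * r t ≤ a t - a (t+1) + (ε/2) * η t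
    have hstep : ∀ t, N ≤ t → η t * r t ≤ a t - a (t + 1) + ε / 2 * η t := by
      intro t ht
      obtain ⟨⟨hB1, hA2⟩, -⟩ := hN t ht
      have ht1 : 1 ≤ t := le_trans hN1 ht
      have := hrec t ht1
      have hη := hηpos t
      have hrt := hr t ht1
      nlinarith [mul_nonneg hη.le hrt, sq_nonneg (η t)]
    -- telescoped : for T ≥ N, ∑_{Icc (N+1) T} η r ≤ a (N+1) - a (T+1) + (ε/2) * S T
    have htel : ∀ T, N ≤ T →
        ∑ t ∈ Finset.Icc (N + 1) T, η t * r t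
          ≤ a (N + 1) - a (T + 1) + ε / 2 * ∑ t ∈ Finset.Icc (N + 1) T, η t := by
      intro T hT
      induction T, hT using Nat.le_induction with
      | base => simp [Finset.Icc_eq_empty (by omega : ¬ N + 1 ≤ N)]
      | succ T hT ih =>
          rw [Finset.sum_Icc_succ_top (by omega), Finset.sum_Icc_succ_top (by omega)]
          have := hstep (T + 1) (by omega)
          linarith
    set C : ℝ := ∑ t ∈ Finset.Icc 1 N, η t * r t + a (N + 1) with hC
    have hCnn : 0 ≤ C := by
      apply add_nonneg _ (ha _)
      apply Finset.sum_nonneg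
      intro t ht
      rw [Finset.mem_Icc] at ht
      exact mul_nonneg (hηpos t).le (hr t ht.1)
    -- u T ≤ C / S T + ε/2
    have hbnd : ∀ T, N ≤ T → u T ≤ C / S T + ε / 2 := by
      intro T hT
      have hT1 : 1 ≤ T := le_trans hN1 hT
      have hSp := hSpos T hT1
      have hsum : ∑ t ∈ Finset.Icc 1 T, η t * r t ≤ C + ε / 2 * S T := by
        rw [sum_split_aux (fun t => η t * r t) N T hT]
        have h3 := htel T hT
        have h4 : ∑ t ∈ Finset.Icc (N + 1) T, η t ≤ S T := by
          rw [hS]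
          apply Finset.sum_le_sum_of_subset_of_nonneg
          · exact Finset.Icc_subset_Icc (by omega) le_rfl
          · exact fun t _ _ => (hηpos t).le
        have h5 := ha (T + 1)
        have h6 : ε / 2 * ∑ t ∈ Finset.Icc (N + 1) T, η t ≤ ε / 2 * S T :=
          mul_le_mul_of_nonneg_left h4 (by positivity)
        rw [hC]; linarith
      rw [hu]
      calc (S T)⁻¹ * ∑ t ∈ Finset.Icc 1 T, η t * r t
          ≤ (S T)⁻¹ * (C + ε / 2 * S T) :=
            mul_le_mul_of_nonneg_left hsum (inv_nonneg.mpr hSp.le)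
        _ = C / S T + ε / 2 * (S T * (S T)⁻¹) := by ring
        _ = C / S T + ε / 2 := by rw [mul_inv_cancel₀ hSp.ne']; ring
    -- S T → ∞, so C / S T ≤ ε/2 eventually
    have hST : ∀ᶠ T in atTop, 2 * C / ε ≤ S T := hdiv.eventually_ge_atTop _
    filter_upwards [hST, eventually_ge_atTop N] with T h7 h8
    have hT1 : 1 ≤ T := le_trans hN1 h8
    have hSp := hSpos T hT1
    have : C / S T ≤ ε / 2 := by
      rw [div_le_iff₀ hSp]
      calc C = 2 * C / ε * (ε / 2) := by field_simp
        _ ≤ S T * (ε / 2) := mul_le_mul_of_nonneg_right h7 (by positivity)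
        _ = ε / 2 * S T := by ring
    have := hbnd T h8
    linarith
  -- conclude (ii)
  have hii : Tendsto u atTop (nhds 0) := by
    rw [Metric.tendsto_atTop]
    intro ε hε
    obtain ⟨N1, h1⟩ := (hmain (ε / 2) (by positivity)).exists_forall_of_atTop
    refine ⟨max N1 1, fun T hT => ?_⟩
    have h2 := h1 T (le_trans (le_max_left _ _) hT)
    have h3 := hu_nonneg T (le_trans (le_max_right _ _) hT)
    rw [Real.dist_eq, sub_zero, abs_of_nonneg h3]
    linarith
  refine ⟨?_, hii⟩
  -- (i): liminf r = 0
  have hfreq : ∀ c : ℝ, 0 < c → ∃ᶠ t in atTop, r t ≤ c := by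
    intro c hc
    by_contra hcon
    rw [not_frequently] at hcon
    simp only [not_le] at hcon
    obtain ⟨N, hNr⟩ := (hcon.and (eventually_ge_atTop 1)).exists_forall_of_atTop
    have hN1 : 1 ≤ N := (hNr N le_rfl).2
    -- then u T ≥ c - c * S N / S T eventually, contradiction with u → 0
    set D : ℝ := c * S N with hD
    have hDnn : 0 ≤ D := mul_nonneg hc.le (by
      apply Finset.sum_nonneg; exact fun t _ => (hηpos t).le)
    have hev : ∀ᶠ T in atTop, c / 2 ≤ u T := by
      have hST : ∀ᶠ T in atTop, 2 * D / c ≤ S T := hdiv.eventually_ge_atTop _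
      filter_upwards [hST, eventually_ge_atTop N] with T h7 h8
      have hT1 : 1 ≤ T := le_trans hN1 h8
      have hSp := hSpos T hT1
      have hsum : c * S T - D ≤ ∑ t ∈ Finset.Icc 1 T, η t * r t := by
        rw [sum_split_aux (fun t => η t * r t) N T h8]
        have h9 : ∑ t ∈ Finset.Icc 1 N, (0:ℝ) ≤ ∑ t ∈ Finset.Icc 1 N, η t * r t := by
          apply Finset.sum_le_sum
          intro t ht
          rw [Finset.mem_Icc] at ht
          exact mul_nonneg (hηpos t).le (hr t ht.1)
        rw [Finset.sum_const, smul_zero] at h9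
        have h10 : ∑ t ∈ Finset.Icc (N + 1) T, c * η t
            ≤ ∑ t ∈ Finset.Icc (N + 1) T, η t * r t := by
          apply Finset.sum_le_sum
          intro t ht
          rw [Finset.mem_Icc] at ht
          have := (hNr t (by omega)).1
          have := hηpos t
          nlinarith
        have h11 : ∑ t ∈ Finset.Icc (N + 1) T, c * η t
            = c * (S T - S N) := by
          rw [← Finset.mul_sum]
          simp only [hS]
          rw [sum_split_aux η N T h8]
          ring
        rw [h11] at h10
        rw [hD]
        linarith
      have hDS : D / S T ≤ c / 2 := by
        rw [div_le_iff₀ hSp]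
        calc D = 2 * D / c * (c / 2) := by field_simp
          _ ≤ S T * (c / 2) := mul_le_mul_of_nonneg_right h7 (by positivity)
          _ = c / 2 * S T := by ring
      have : c - D / S T ≤ u T := by
        rw [hu]
        calc c - D / S T = (S T)⁻¹ * (c * S T - D) := by field_simp
          _ ≤ (S T)⁻¹ * ∑ t ∈ Finset.Icc 1 T, η t * r t :=
              mul_le_mul_of_nonneg_left hsum (inv_nonneg.mpr hSp.le)
      linarith
    have := (hii.eventually_lt_const (by positivity : (0:ℝ) < c / 2)).and hev
    obtain ⟨T, hT⟩ := this.exists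
    linarith [hT.1, hT.2]
  have hbdd : IsBoundedUnder (· ≥ ·) atTop r := by
    refine ⟨0, ?_⟩
    rw [eventually_map]
    filter_upwards [eventually_ge_atTop 1] with t ht using hr t ht
  have hcob : IsCoboundedUnder (· ≥ ·) atTop r :=
    IsCoboundedUnder.of_frequently_le (hfreq 1 one_pos)
  have hle : liminf r atTop ≤ 0 := by
    by_contra hcon
    push_neg at hcon
    have := liminf_le_of_frequently_le (hfreq (liminf r atTop / 2) (by linarith)) hbdd
    linarith
  have hge : 0 ≤ liminf r atTop := by
    apply le_liminf_of_le hcob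
    filter_upwards [eventually_ge_atTop 1] with t ht using hr t ht
  linarith [le_antisymm hle hge]
/-- Proposition 2 (weak convergence in expectation): if `η_t → 0` and `∑ η_t = ∞`, then
(i) the liminf of the expected excess generalization errors is zero, and (ii) the weighted
averages of the expected excess generalization errors converge to zero. -/
theorem liminf_and_weighted_average_of_expected_errors
    {X : Type*} [MeasurableSpace X] {Y : Set ℝ}
    {H : Type*} [NormedAddCommGroup H] [InnerProductSpace ℝ H] [CompleteSpace H]
    [MeasurableSpace H] [BorelSpace H] [SecondCountableTopology H]
    (K : X → H) (hKmeas : Measurable K)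
    (κ : ℝ) (hκ : ∀ x : X, ‖K x‖ ≤ κ)
    (L α : ℝ) (hL : 0 < L) (hα : α ∈ Set.Ioc (0 : ℝ) 1)
    (φ φ' : ℝ → ℝ → ℝ)
    (hφmeas : Measurable fun p : ℝ × ℝ => φ p.1 p.2)
    (hφ'meas : Measurable fun p : ℝ × ℝ => φ' p.1 p.2)
    (hφnonneg : ∀ y ∈ Y, ∀ s : ℝ, 0 ≤ φ y s)
    (hφconv : ∀ y ∈ Y, ConvexOn ℝ Set.univ (φ y))
    (hφderiv : ∀ y ∈ Y, ∀ s : ℝ, HasDerivAt (φ y) (φ' y s) s)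
    (hφholder : ∀ y ∈ Y, ∀ s t : ℝ, |φ' y s - φ' y t| ≤ L * |s - t| ^ α)
    (ρ : Measure (X × Y)) [IsProbabilityMeasure ρ]
    (E : H → ℝ) (hE : E = fun g : H => ∫ z : X × Y, φ (z.2 : ℝ) ⟪g, K z.1⟫ ∂ρ)
    (hEint : ∀ g : H, Integrable (fun z : X × Y => φ (z.2 : ℝ) ⟪g, K z.1⟫) ρ)
    (hgint : ∀ g : H, Integrable (fun z : X × Y => φ' (z.2 : ℝ) ⟪g, K z.1⟫ • K z.1) ρ)
    (fH : H) (hmin : ∀ g : H, E fH ≤ E g)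
    (hgradH : (∫ z : X × Y, φ' (z.2 : ℝ) ⟪fH, K z.1⟫ • K z.1 ∂ρ) = 0)
    (M0 MH : ℝ) (hM0 : ∀ z : X × Y, φ (z.2 : ℝ) 0 ≤ M0)
    (hMH : ∀ z : X × Y, φ (z.2 : ℝ) ⟪fH, K z.1⟫ ≤ MH)
    {Ω : Type*} [MeasurableSpace Ω] (P : Measure Ω) [IsProbabilityMeasure P]
    (zs : ℕ → Ω → X × Y) (hzmeas : ∀ t, Measurable (zs t))
    (hzdist : ∀ t, Measure.map (zs t) P = ρ)
    (hziid : iIndepFun zs P)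
    (η : ℕ → ℝ) (hηpos : ∀ t, 0 < η t)
    (f : ℕ → Ω → H) (hf1 : ∀ ω : Ω, f 1 ω = 0)
    (hfrec : ∀ t, 1 ≤ t → ∀ ω : Ω,
      f (t + 1) ω = f t ω - (η t * φ' (((zs t ω).2 : Y) : ℝ) ⟪f t ω, K (zs t ω).1⟫) • K (zs t ω).1)
    (hη0 : Tendsto η atTop (nhds 0))
    (hdiv : Tendsto (fun T => ∑ t ∈ Finset.Icc 1 T, η t) atTop atTop) :
    Filter.liminf (fun t => (∫ ω, E (f t ω) ∂P) - E fH) atTop = 0 ∧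
      Tendsto (fun T => (∑ t ∈ Finset.Icc 1 T, η t)⁻¹ *
          ∑ t ∈ Finset.Icc 1 T, η t * ((∫ ω, E (f t ω) ∂P) - E fH))
        atTop (nhds 0) := by
  obtain ⟨hα0, hα1⟩ := hα
  -- basic constants
  have hne : Nonempty (X × Y) := by
    by_contra hcon
    rw [not_nonempty_iff] at hcon
    have h1 : ρ Set.univ = 1 := measure_univ
    rw [Set.univ_eq_empty_iff.mpr hcon, measure_empty] at h1
    exact zero_ne_one h1
  obtain ⟨z0⟩ := hne
  have hκ0 : (0:ℝ) ≤ κ := le_trans (norm_nonneg _) (hκ z0.1)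
  have htan : ∀ y ∈ Y, ∀ s t : ℝ, φ y s + φ' y s * (t - s) ≤ φ y t :=
    fun y hy => convex_tangent_le (hφconv y hy) (hφderiv y hy)
  have hM0nn : (0:ℝ) ≤ M0 := le_trans (hφnonneg _ z0.2.2 0) (hM0 z0)
  set B0 : ℝ := M0 + L with hB0def
  have hB0nn : 0 < B0 := by rw [hB0def]; linarith
  have hφ0 : ∀ y ∈ Y, φ y 0 ≤ M0 := fun y hy => hM0 (z0.1, ⟨y, hy⟩)
  -- |φ' y 0| ≤ B0
  have hB0 : ∀ y ∈ Y, |φ' y 0| ≤ B0 := by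
    intro y hy
    have h1 : φ y 1 + φ' y 1 * (0 - 1) ≤ φ y 0 := htan y hy 1 0
    have h2 : φ y (-1) + φ' y (-1) * (0 - (-1)) ≤ φ y 0 := htan y hy (-1) 0
    have h3 : -M0 ≤ φ' y 1 := by nlinarith [hφnonneg y hy 1, hφ0 y hy]
    have h4 : φ' y (-1) ≤ M0 := by nlinarith [hφnonneg y hy (-1), hφ0 y hy]
    have h5 := hφholder y hy 0 1
    have h6 := hφholder y hy 0 (-1)
    have h7 : |(0:ℝ) - 1| ^ α = 1 := by norm_num
    have h8 : |(0:ℝ) - (-1)| ^ α = 1 := by norm_num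
    rw [h7] at h5; rw [h8] at h6
    rw [abs_le] at h5 h6 ⊢
    constructor
    · rw [hB0def]; linarith [h5.1, h5.2]
    · rw [hB0def]; linarith [h6.1, h6.2]
  -- |φ' y s| ≤ B0 + L |s|^α
  have hφ'b : ∀ y ∈ Y, ∀ s : ℝ, |φ' y s| ≤ B0 + L * |s| ^ α := by
    intro y hy s
    have h1 := hφholder y hy s 0
    rw [sub_zero] at h1
    have h2 := hB0 y hy
    calc |φ' y s| ≤ |φ' y s - φ' y 0| + |φ' y 0| := by
          have := abs_sub_le (φ' y s) (φ' y 0) 0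
          simpa using this
    _ ≤ L * |s| ^ α + B0 := add_le_add h1 h2
    _ = B0 + L * |s| ^ α := by ring
  -- self-bounding
  set c : ℝ := 4 * L ^ (2 / (1 + α)) with hcdef
  have hc0 : 0 ≤ c := by rw [hcdef]; positivity
  have hself : ∀ y ∈ Y, ∀ s : ℝ, (φ' y s) ^ 2 ≤ c * (1 + φ y s) := fun y hy =>
    selfbound_sq hL hα0 hα1 (hφnonneg y hy) (htan y hy) (hφholder y hy)
  -- bound on φ near bounded arguments
  have hφbnd : ∀ y ∈ Y, ∀ s R : ℝ, 0 ≤ R → |s| ≤ R → φ y s ≤ M0 + (B0 + L * R ^ α) * R := by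
    intro y hy s R hR hsR
    have h1 : φ y s + φ' y s * (0 - s) ≤ φ y 0 := htan y hy s 0
    have h2 : φ y s ≤ φ y 0 + φ' y s * s := by nlinarith
    have h3 : φ' y s * s ≤ |φ' y s| * |s| := le_trans (le_abs_self _) (by rw [abs_mul])
    have h4 : |φ' y s| ≤ B0 + L * R ^ α := by
      refine (hφ'b y hy s).trans ?_
      have : |s| ^ α ≤ R ^ α := Real.rpow_le_rpow (abs_nonneg _) hsR hα0.le
      nlinarith
    have h5 : |φ' y s| * |s| ≤ (B0 + L * R ^ α) * R := by
      apply mul_le_mul h4 hsR (abs_nonneg _)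
      have : (0:ℝ) ≤ L * R ^ α := by positivity
      linarith
    linarith [hφ0 y hy]
  -- Lipschitz-type bound for φ on bounded arguments
  have hφdiff : ∀ y ∈ Y, ∀ s t R : ℝ, 0 ≤ R → |s| ≤ R → |t| ≤ R →
      |φ y s - φ y t| ≤ (B0 + L * R ^ α) * |s - t| := by
    intro y hy s t R hR hsR htR
    have hb : ∀ u : ℝ, |u| ≤ R → |φ' y u| ≤ B0 + L * R ^ α := by
      intro u hu
      refine (hφ'b y hy u).trans ?_
      have : |u| ^ α ≤ R ^ α := Real.rpow_le_rpow (abs_nonneg _) hu hα0.le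
      nlinarith
    have h1 : φ y s + φ' y s * (t - s) ≤ φ y t := htan y hy s t
    have h2 : φ y t + φ' y t * (s - t) ≤ φ y s := htan y hy t s
    rw [abs_sub_le_iff]
    constructor
    · have hst : φ y s - φ y t ≤ φ' y s * (s - t) := by nlinarith
      refine hst.trans ?_
      calc φ' y s * (s - t) ≤ |φ' y s * (s - t)| := le_abs_self _
        _ = |φ' y s| * |s - t| := abs_mul _ _
        _ ≤ (B0 + L * R ^ α) * |s - t| :=
            mul_le_mul_of_nonneg_right (hb s hsR) (abs_nonneg _)
    · have hts : φ y t - φ y s ≤ φ' y t * (t - s) := by nlinarith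
      refine hts.trans ?_
      calc φ' y t * (t - s) ≤ |φ' y t * (t - s)| := le_abs_self _
        _ = |φ' y t| * |t - s| := abs_mul _ _
        _ = |φ' y t| * |s - t| := by rw [abs_sub_comm]
        _ ≤ (B0 + L * R ^ α) * |s - t| :=
            mul_le_mul_of_nonneg_right (hb t htR) (abs_nonneg _)
  -- measurability of sample component maps
  have hym : ∀ t, Measurable fun ω => ((zs t ω).2 : ℝ) :=
    fun t => measurable_subtype_coe.comp (measurable_snd.comp (hzmeas t))
  have hKm : ∀ t, Measurable fun ω => K (zs t ω).1 :=
    fun t => hKmeas.comp (measurable_fst.comp (hzmeas t))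
  -- measurability and uniform boundedness of the iterates
  have hfb : ∀ t, 1 ≤ t → Measurable (f t) ∧ ∃ C : ℝ, 0 ≤ C ∧ ∀ ω, ‖f t ω‖ ≤ C := by
    intro t ht
    induction t, ht using Nat.le_induction with
    | base =>
        refine ⟨?_, 0, le_rfl, fun ω => by rw [hf1]; simp⟩
        have : f 1 = fun _ => (0 : H) := funext hf1
        rw [this]; exact measurable_const
    | succ t ht ih =>
        obtain ⟨hm, C, hC0, hCb⟩ := ih
        have hrw : f (t + 1) = fun ω =>
            f t ω - (η t * φ' ((zs t ω).2 : ℝ) ⟪f t ω, K (zs t ω).1⟫) • K (zs t ω).1 :=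
          funext (hfrec t ht)
        have hin : Measurable fun ω => (⟪f t ω, K (zs t ω).1⟫ : ℝ) := hm.inner (hKm t)
        have hphi : Measurable fun ω => φ' ((zs t ω).2 : ℝ) ⟪f t ω, K (zs t ω).1⟫ :=
          hφ'meas.comp ((hym t).prodMk hin)
        constructor
        · rw [hrw]
          exact hm.sub ((measurable_const.mul hphi).smul (hKm t))
        · have hκC : (0:ℝ) ≤ κ * C := mul_nonneg hκ0 hC0
          have hfac : (0:ℝ) ≤ (B0 + L * (κ * C) ^ α) * κ :=
            mul_nonneg (add_nonneg hB0nn.le (mul_nonneg hL.le (Real.rpow_nonneg hκC _))) hκ0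
          refine ⟨C + η t * ((B0 + L * (κ * C) ^ α) * κ), ?_, ?_⟩
          · have := mul_nonneg (hηpos t).le hfac
            linarith
          · intro ω
            rw [hrw]
            have h1 : ‖f t ω - (η t * φ' ((zs t ω).2 : ℝ) ⟪f t ω, K (zs t ω).1⟫) • K (zs t ω).1‖
                ≤ ‖f t ω‖ + ‖(η t * φ' ((zs t ω).2 : ℝ) ⟪f t ω, K (zs t ω).1⟫) • K (zs t ω).1‖ :=
              norm_sub_le _ _
            have h2 : ‖(η t * φ' ((zs t ω).2 : ℝ) ⟪f t ω, K (zs t ω).1⟫) • K (zs t ω).1‖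
                = |η t * φ' ((zs t ω).2 : ℝ) ⟪f t ω, K (zs t ω).1⟫| * ‖K (zs t ω).1‖ := by
              rw [norm_smul, Real.norm_eq_abs]
            have h3 : |⟪f t ω, K (zs t ω).1⟫| ≤ κ * C := by
              calc |(⟪f t ω, K (zs t ω).1⟫ : ℝ)| ≤ ‖f t ω‖ * ‖K (zs t ω).1‖ :=
                    abs_real_inner_le_norm _ _
                _ ≤ C * κ := mul_le_mul (hCb ω) (hκ _) (norm_nonneg _) hC0
                _ = κ * C := by ring
            have h4 : |φ' ((zs t ω).2 : ℝ) ⟪f t ω, K (zs t ω).1⟫| ≤ B0 + L * (κ * C) ^ α := by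
              refine (hφ'b _ (zs t ω).2.2 _).trans ?_
              have : |(⟪f t ω, K (zs t ω).1⟫ : ℝ)| ^ α ≤ (κ * C) ^ α :=
                Real.rpow_le_rpow (abs_nonneg _) h3 hα0.le
              nlinarith
            have h5 : |η t * φ' ((zs t ω).2 : ℝ) ⟪f t ω, K (zs t ω).1⟫|
                ≤ η t * (B0 + L * (κ * C) ^ α) := by
              rw [abs_mul, abs_of_pos (hηpos t)]
              exact mul_le_mul_of_nonneg_left h4 (hηpos t).le
            have h6 : |η t * φ' ((zs t ω).2 : ℝ) ⟪f t ω, K (zs t ω).1⟫| * ‖K (zs t ω).1‖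
                ≤ η t * (B0 + L * (κ * C) ^ α) * κ := by
              apply mul_le_mul h5 (hκ _) (norm_nonneg _)
              have hκC : (0:ℝ) ≤ κ * C := mul_nonneg hκ0 hC0
              have : (0:ℝ) ≤ L * (κ * C) ^ α := mul_nonneg hL.le (Real.rpow_nonneg hκC _)
              have := (hηpos t).le
              nlinarith
            calc ‖f t ω - (η t * φ' ((zs t ω).2 : ℝ) ⟪f t ω, K (zs t ω).1⟫) • K (zs t ω).1‖
                ≤ ‖f t ω‖ + |η t * φ' ((zs t ω).2 : ℝ) ⟪f t ω, K (zs t ω).1⟫| * ‖K (zs t ω).1‖ := by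
                  rw [← h2]; exact h1
              _ ≤ C + η t * (B0 + L * (κ * C) ^ α) * κ := add_le_add (hCb ω) h6
              _ = C + η t * ((B0 + L * (κ * C) ^ α) * κ) := by ring
  -- E is nonnegative and bounded on bounded sets, and continuous
  have hEnn : ∀ g : H, 0 ≤ E g := by
    intro g
    rw [hE]
    exact integral_nonneg fun z => hφnonneg _ z.2.2 _
  have hEbd : ∀ (Cg : ℝ), 0 ≤ Cg → ∀ g : H, ‖g‖ ≤ Cg →
      E g ≤ M0 + (B0 + L * (κ * Cg) ^ α) * (κ * Cg) := by
    intro Cg hCg g hg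
    rw [hE]
    have hint : Integrable (fun _ : X × Y => M0 + (B0 + L * (κ * Cg) ^ α) * (κ * Cg)) ρ :=
      integrable_const _
    have := integral_mono (hEint g) hint (fun z => by
      apply hφbnd _ z.2.2 _ _ (mul_nonneg hκ0 hCg)
      calc |(⟪g, K z.1⟫ : ℝ)| ≤ ‖g‖ * ‖K z.1‖ := abs_real_inner_le_norm _ _
        _ ≤ Cg * κ := mul_le_mul hg (hκ _) (norm_nonneg _) hCg
        _ = κ * Cg := by ring)
    simpa using this
  have hEcont : Continuous E := by
    rw [continuous_iff_continuousAt]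
    intro g₀
    set R : ℝ := κ * (‖g₀‖ + 1) with hRdef
    have hR0 : 0 ≤ R := mul_nonneg hκ0 (by positivity)
    set M : ℝ := (B0 + L * R ^ α) * κ with hMdef
    have hLR : (0:ℝ) ≤ B0 + L * R ^ α :=
      add_nonneg hB0nn.le (mul_nonneg hL.le (Real.rpow_nonneg hR0 _))
    have hM0' : 0 ≤ M := mul_nonneg hLR hκ0
    have hlip : LipschitzOnWith (Real.toNNReal M) E (Metric.ball g₀ 1) := by
      apply LipschitzOnWith.of_dist_le_mul
      intro g1 hg1 g2 hg2
      rw [Metric.mem_ball] at hg1 hg2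
      rw [Real.dist_eq, dist_eq_norm, Real.coe_toNNReal _ hM0']
      have hb : ∀ g : H, dist g g₀ < 1 → ∀ z : X × Y, |(⟪g, K z.1⟫ : ℝ)| ≤ R := by
        intro g hg z
        have : ‖g‖ ≤ ‖g₀‖ + 1 := by
          have h1 : ‖g‖ - ‖g₀‖ ≤ ‖g - g₀‖ := norm_sub_norm_le g g₀
          rw [dist_eq_norm] at hg
          linarith
        calc |(⟪g, K z.1⟫ : ℝ)| ≤ ‖g‖ * ‖K z.1‖ := abs_real_inner_le_norm _ _
          _ ≤ (‖g₀‖ + 1) * κ := mul_le_mul this (hκ _) (norm_nonneg _) (by positivity)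
          _ = R := by rw [hRdef]; ring
      have heq : E g1 - E g2 = ∫ z : X × Y, (φ ((z.2:Y):ℝ) ⟪g1, K z.1⟫ - φ ((z.2:Y):ℝ) ⟪g2, K z.1⟫) ∂ρ := by
        rw [hE, integral_sub (hEint g1) (hEint g2)]
      rw [heq]
      have hptw : ∀ z : X × Y,
          ‖φ ((z.2:Y):ℝ) ⟪g1, K z.1⟫ - φ ((z.2:Y):ℝ) ⟪g2, K z.1⟫‖ ≤ M * ‖g1 - g2‖ := by
        intro z
        rw [Real.norm_eq_abs]
        calc |φ ((z.2:Y):ℝ) ⟪g1, K z.1⟫ - φ ((z.2:Y):ℝ) ⟪g2, K z.1⟫|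
            ≤ (B0 + L * R ^ α) * |(⟪g1, K z.1⟫ : ℝ) - ⟪g2, K z.1⟫| :=
              hφdiff _ z.2.2 _ _ R hR0 (hb g1 hg1 z) (hb g2 hg2 z)
          _ ≤ (B0 + L * R ^ α) * (κ * ‖g1 - g2‖) := by
              apply mul_le_mul_of_nonneg_left _ hLR
              rw [← inner_sub_left]
              calc |(⟪g1 - g2, K z.1⟫ : ℝ)| ≤ ‖g1 - g2‖ * ‖K z.1‖ := abs_real_inner_le_norm _ _
                _ ≤ ‖g1 - g2‖ * κ := mul_le_mul_of_nonneg_left (hκ _) (norm_nonneg _)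
                _ = κ * ‖g1 - g2‖ := by ring
          _ = M * ‖g1 - g2‖ := by rw [hMdef]; ring
      have := norm_integral_le_of_norm_le_const (μ := ρ) (C := M * ‖g1 - g2‖)
        (ae_of_all _ hptw)
      simpa [dist_eq_norm] using this
    exact hlip.continuousOn.continuousAt (Metric.ball_mem_nhds g₀ one_pos)
  -- independence of f t and zs t
  have hindep : ∀ t, 1 ≤ t → IndepFun (f t) (zs t) P := by
    have hFf : ∀ u, 1 ≤ u →
        @Measurable Ω H (⨆ i ∈ Set.Iio u, MeasurableSpace.comap (zs i) inferInstance) _ (f u) := by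
      intro u hu
      induction u, hu using Nat.le_induction with
      | base =>
          have : f 1 = fun _ => (0 : H) := funext hf1
          rw [this]; exact measurable_const
      | succ u hu ih =>
          set Fu := ⨆ i ∈ Set.Iio u, MeasurableSpace.comap (zs i) inferInstance with hFu
          set Fu1 := ⨆ i ∈ Set.Iio (u + 1), MeasurableSpace.comap (zs i) inferInstance with hFu1
          have hle : Fu ≤ Fu1 := by
            apply biSup_mono
            intro i hi
            exact lt_trans hi (Nat.lt_succ_self u)
          have hfu : @Measurable Ω H Fu1 _ (f u) := ih.mono hle le_rfl
          have hz : @Measurable Ω (X × Y) Fu1 _ (zs u) := by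
            apply Measurable.of_comap_le
            exact le_biSup (fun i => MeasurableSpace.comap (zs i) inferInstance)
              (Nat.lt_succ_self u)
          have hymu : @Measurable Ω ℝ Fu1 _ (fun ω => ((zs u ω).2 : ℝ)) :=
            measurable_subtype_coe.comp (measurable_snd.comp hz)
          have hKmu : @Measurable Ω H Fu1 _ (fun ω => K (zs u ω).1) :=
            hKmeas.comp (measurable_fst.comp hz)
          have hin : @Measurable Ω ℝ Fu1 _ (fun ω => (⟪f u ω, K (zs u ω).1⟫ : ℝ)) :=
            hfu.inner hKmu
          have hphi : @Measurable Ω ℝ Fu1 _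
              (fun ω => φ' ((zs u ω).2 : ℝ) ⟪f u ω, K (zs u ω).1⟫) :=
            hφ'meas.comp (hymu.prodMk hin)
          have hrw : f (u + 1) = fun ω =>
              f u ω - (η u * φ' ((zs u ω).2 : ℝ) ⟪f u ω, K (zs u ω).1⟫) • K (zs u ω).1 :=
            funext (hfrec u hu)
          rw [hrw]
          exact hfu.sub (((@measurable_const ℝ Ω _ Fu1 (η u)).mul hphi).smul hKmu)
    intro t ht
    have hI : Indep (⨆ i ∈ Set.Iio t, MeasurableSpace.comap (zs i) inferInstance)
        (MeasurableSpace.comap (zs t) inferInstance) P := by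
      have hdisj : Disjoint (Set.Iio t) ({t} : Set ℕ) := by
        simp only [Set.disjoint_left, Set.mem_Iio, Set.mem_singleton_iff]
        exact fun a ha => ha.ne
      have := indep_iSup_of_disjoint
        (fun i => (hzmeas i).comap_le) (hziid) hdisj
      simpa using this
    have hcomap : MeasurableSpace.comap (f t) inferInstance
        ≤ ⨆ i ∈ Set.Iio t, MeasurableSpace.comap (zs i) inferInstance :=
      (hFf t ht).comap_le
    exact indep_of_indep_of_le_left hI hcomap
  -- Fubini decomposition of expectations of functionals of (f t, zs t)
  have hfub : ∀ t, 1 ≤ t → ∀ (h : H → (X × Y) → ℝ) (Cg Cb : ℝ),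
      Measurable (fun p : H × (X × Y) => h p.1 p.2) →
      (∀ ω, ‖f t ω‖ ≤ Cg) →
      (∀ g z, ‖g‖ ≤ Cg → |h g z| ≤ Cb) →
      ∫ ω, h (f t ω) (zs t ω) ∂P = ∫ ω, ∫ z, h (f t ω) z ∂ρ ∂P := by
    intro t ht h Cg Cb hmeas hCg hCb
    have hft := (hfb t ht).1
    have hpair : Measurable fun ω => (f t ω, zs t ω) := hft.prodMk (hzmeas t)
    have hmap : P.map (fun ω => (f t ω, zs t ω)) = (P.map (f t)).prod ρ := by
      rw [← hzdist t]
      exact (indepFun_iff_map_prod_eq_prod_map_map hft.aemeasurable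
        (hzmeas t).aemeasurable).mp (hindep t ht)
    have hprob : IsProbabilityMeasure (P.map (f t)) := Measure.isProbabilityMeasure_map hft.aemeasurable
    -- a.e. bound on the product measure
    have hae : ∀ᵐ p : H × (X × Y) ∂((P.map (f t)).prod ρ), ‖h p.1 p.2‖ ≤ Cb := by
      have hball : (P.map (f t)) {g : H | ¬ ‖g‖ ≤ Cg} = 0 := by
        rw [show {g : H | ¬ ‖g‖ ≤ Cg} = {g : H | ‖g‖ ≤ Cg}ᶜ from rfl,
          Measure.map_apply hft
            ((measurableSet_le measurable_norm measurable_const).compl),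
          show (f t) ⁻¹' {g : H | ‖g‖ ≤ Cg}ᶜ = ∅ from by ext ω; simp [hCg ω],
          measure_empty]
      have hae1 : ∀ᵐ g ∂(P.map (f t)), ‖g‖ ≤ Cg := by
        rw [ae_iff]; exact hball
      have hae2 : ∀ᵐ p : H × (X × Y) ∂((P.map (f t)).prod ρ), ‖p.1‖ ≤ Cg := by
        rw [ae_iff]
        have hsub : {p : H × (X × Y) | ¬ ‖p.1‖ ≤ Cg} = {g : H | ¬ ‖g‖ ≤ Cg} ×ˢ Set.univ := by
          ext p; simp
        rw [hsub, Measure.prod_prod, hball, zero_mul]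
      filter_upwards [hae2] with p hp
      rw [Real.norm_eq_abs]
      exact hCb p.1 p.2 hp
    have hint : Integrable (fun p : H × (X × Y) => h p.1 p.2) ((P.map (f t)).prod ρ) :=
      Integrable.mono' (integrable_const Cb) hmeas.aestronglyMeasurable hae
    calc ∫ ω, h (f t ω) (zs t ω) ∂P
        = ∫ p : H × (X × Y), h p.1 p.2 ∂(P.map fun ω => (f t ω, zs t ω)) := by
          rw [integral_map hpair.aemeasurable hmeas.aestronglyMeasurable]
      _ = ∫ p : H × (X × Y), h p.1 p.2 ∂((P.map (f t)).prod ρ) := by rw [hmap]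
      _ = ∫ g, ∫ z, h g z ∂ρ ∂(P.map (f t)) := MeasureTheory.integral_prod _ hint
      _ = ∫ ω, ∫ z, h (f t ω) z ∂ρ ∂P := by
          rw [integral_map hft.aemeasurable
            (hmeas.stronglyMeasurable.integral_prod_right').aestronglyMeasurable]
  -- the one-step expected inequality constants
  set Bc : ℝ := κ ^ 2 * c with hBcdef
  have hBc0 : 0 ≤ Bc := mul_nonneg (sq_nonneg κ) hc0
  set Ac : ℝ := κ ^ 2 * c * (1 + E fH) with hAcdef
  have hAc0 : 0 ≤ Ac := mul_nonneg (mul_nonneg (sq_nonneg κ) hc0) (by linarith [hEnn fH])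
  -- key one-step inequality in the sample space
  have hkey : ∀ (t : ℕ) (g : H),
      ∫ z : X × Y, ‖(g - fH) - (η t * φ' ((z.2 : Y) : ℝ) ⟪g, K z.1⟫) • K z.1‖ ^ 2 ∂ρ
        ≤ ‖g - fH‖ ^ 2 - 2 * η t * (E g - E fH) + η t ^ 2 * (Ac + Bc * (E g - E fH)) := by
    intro t g
    set w : X × Y → ℝ := fun z => φ' ((z.2 : Y) : ℝ) ⟪g, K z.1⟫ with hwdef
    have hwmeas : Measurable w := hφ'meas.comp
      ((measurable_subtype_coe.comp measurable_snd).prodMk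
        (measurable_const.inner (hKmeas.comp measurable_fst)))
    have hgb : ∀ z : X × Y, |(⟪g, K z.1⟫ : ℝ)| ≤ κ * ‖g‖ := by
      intro z
      calc |(⟪g, K z.1⟫ : ℝ)| ≤ ‖g‖ * ‖K z.1‖ := abs_real_inner_le_norm _ _
        _ ≤ ‖g‖ * κ := mul_le_mul_of_nonneg_left (hκ _) (norm_nonneg _)
        _ = κ * ‖g‖ := by ring
    set D : ℝ := B0 + L * (κ * ‖g‖) ^ α with hDdef
    have hD0 : 0 ≤ D := add_nonneg hB0nn.le
      (mul_nonneg hL.le (Real.rpow_nonneg (mul_nonneg hκ0 (norm_nonneg g)) _))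
    have hwb : ∀ z, |w z| ≤ D := by
      intro z
      refine (hφ'b _ z.2.2 _).trans ?_
      have := Real.rpow_le_rpow (abs_nonneg _) (hgb z) hα0.le
      rw [hDdef]
      nlinarith
    have hexp : ∀ z : X × Y,
        ‖(g - fH) - (η t * w z) • K z.1‖ ^ 2
          = ‖g - fH‖ ^ 2 - 2 * η t * (w z * ⟪g - fH, K z.1⟫)
            + η t ^ 2 * (w z ^ 2 * ‖K z.1‖ ^ 2) := by
      intro z
      rw [norm_sub_sq_real, real_inner_smul_right, norm_smul, Real.norm_eq_abs, mul_pow, sq_abs]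
      ring
    have hint1 : Integrable (fun z : X × Y => w z * ⟪g - fH, K z.1⟫) ρ := by
      have h1 := Integrable.const_inner (𝕜 := ℝ) (g - fH) (hgint g)
      simp only [real_inner_smul_right] at h1
      exact h1
    have hKsqm : Measurable fun z : X × Y => ‖K z.1‖ ^ 2 :=
      ((measurable_norm.comp (hKmeas.comp measurable_fst)).pow_const 2)
    have hint2 : Integrable (fun z : X × Y => w z ^ 2 * ‖K z.1‖ ^ 2) ρ := by
      apply Integrable.mono' (integrable_const (D ^ 2 * κ ^ 2))
        ((hwmeas.pow_const 2).mul hKsqm).aestronglyMeasurable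
      apply ae_of_all
      intro z
      rw [Real.norm_eq_abs, Pi.mul_apply, abs_mul, abs_pow, abs_pow]
      apply mul_le_mul _ _ (by positivity) (by positivity)
      · exact pow_le_pow_left₀ (abs_nonneg _) (hwb z) 2
      · rw [abs_norm]
        exact pow_le_pow_left₀ (norm_nonneg _) (hκ _) 2
    have hI : ∫ z : X × Y, ‖(g - fH) - (η t * w z) • K z.1‖ ^ 2 ∂ρ
        = ‖g - fH‖ ^ 2 - 2 * η t * (∫ z : X × Y, w z * ⟪g - fH, K z.1⟫ ∂ρ)
          + η t ^ 2 * (∫ z : X × Y, w z ^ 2 * ‖K z.1‖ ^ 2 ∂ρ) := by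
      rw [show (fun z : X × Y => ‖(g - fH) - (η t * w z) • K z.1‖ ^ 2)
          = fun z : X × Y => (‖g - fH‖ ^ 2 - 2 * η t * (w z * ⟪g - fH, K z.1⟫))
            + η t ^ 2 * (w z ^ 2 * ‖K z.1‖ ^ 2) from funext hexp]
      have hA : Integrable
          (fun z : X × Y => ‖g - fH‖ ^ 2 - 2 * η t * (w z * ⟪g - fH, K z.1⟫)) ρ :=
        (integrable_const _).sub (hint1.const_mul _)
      have hB : Integrable (fun z : X × Y => η t ^ 2 * (w z ^ 2 * ‖K z.1‖ ^ 2)) ρ :=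
        hint2.const_mul _
      rw [integral_add hA hB, integral_sub (integrable_const _) (hint1.const_mul _),
        integral_const_mul, integral_const_mul, integral_const]
      simp [measure_univ]
    have hI1 : E g - E fH ≤ ∫ z : X × Y, w z * ⟪g - fH, K z.1⟫ ∂ρ := by
      have hq : Integrable
          (fun z : X × Y => φ ((z.2 : Y) : ℝ) ⟪g, K z.1⟫ - φ ((z.2 : Y) : ℝ) ⟪fH, K z.1⟫) ρ :=
        (hEint g).sub (hEint fH)
      have hptw : ∀ z : X × Y,
          φ ((z.2 : Y) : ℝ) ⟪g, K z.1⟫ - φ ((z.2 : Y) : ℝ) ⟪fH, K z.1⟫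
            ≤ w z * ⟪g - fH, K z.1⟫ := by
        intro z
        have h1 := htan _ z.2.2 (⟪g, K z.1⟫ : ℝ) (⟪fH, K z.1⟫ : ℝ)
        have h2 : (⟪g - fH, K z.1⟫ : ℝ) = ⟪g, K z.1⟫ - ⟪fH, K z.1⟫ := inner_sub_left _ _ _
        rw [h2, hwdef]
        nlinarith
      have h3 := integral_mono hq hint1 hptw
      rw [integral_sub (hEint g) (hEint fH)] at h3
      simp only [hE]
      exact h3
    have hI2 : ∫ z : X × Y, w z ^ 2 * ‖K z.1‖ ^ 2 ∂ρ ≤ κ ^ 2 * c * (1 + E g) := by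
      have hptw : ∀ z : X × Y,
          w z ^ 2 * ‖K z.1‖ ^ 2 ≤ κ ^ 2 * (c * (1 + φ ((z.2 : Y) : ℝ) ⟪g, K z.1⟫)) := by
        intro z
        have h1 : w z ^ 2 ≤ c * (1 + φ ((z.2 : Y) : ℝ) ⟪g, K z.1⟫) := hself _ z.2.2 _
        have h2 : ‖K z.1‖ ^ 2 ≤ κ ^ 2 := by nlinarith [hκ z.1, norm_nonneg (K z.1)]
        nlinarith [sq_nonneg (w z), hφnonneg _ z.2.2 (⟪g, K z.1⟫ : ℝ), hc0,
          sq_nonneg (‖K z.1‖), sq_nonneg κ]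
      have hintr : Integrable
          (fun z : X × Y => κ ^ 2 * (c * (1 + φ ((z.2 : Y) : ℝ) ⟪g, K z.1⟫))) ρ :=
        ((((integrable_const 1).add (hEint g)).const_mul c).const_mul (κ ^ 2))
      have h3 := integral_mono hint2 hintr hptw
      rw [integral_const_mul, integral_const_mul,
        integral_add (integrable_const 1) (hEint g), integral_const] at h3
      simp only [measure_univ, probReal_univ, ENNReal.toReal_one, smul_eq_mul, mul_one] at h3
      calc ∫ z : X × Y, w z ^ 2 * ‖K z.1‖ ^ 2 ∂ρ
          ≤ κ ^ 2 * (c * (1 + ∫ z : X × Y, φ ((z.2 : Y) : ℝ) ⟪g, K z.1⟫ ∂ρ)) := h3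
        _ = κ ^ 2 * c * (1 + E g) := by rw [hE]; ring
    have e1 : 2 * η t * (E g - E fH) ≤ 2 * η t * ∫ z : X × Y, w z * ⟪g - fH, K z.1⟫ ∂ρ :=
      mul_le_mul_of_nonneg_left hI1 (by linarith [(hηpos t).le])
    have e2 : η t ^ 2 * (∫ z : X × Y, w z ^ 2 * ‖K z.1‖ ^ 2 ∂ρ)
        ≤ η t ^ 2 * (κ ^ 2 * c * (1 + E g)) :=
      mul_le_mul_of_nonneg_left hI2 (sq_nonneg _)
    have e3 : Ac + Bc * (E g - E fH) = κ ^ 2 * c * (1 + E g) := by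
      rw [hAcdef, hBcdef]; ring
    rw [hI]
    rw [e3]
    linarith
  -- integrability of the ω-functionals
  have hEfint : ∀ t, 1 ≤ t → Integrable (fun ω => E (f t ω)) P := by
    intro t ht
    obtain ⟨hm, C, hC0, hCb⟩ := hfb t ht
    apply Integrable.mono' (integrable_const (M0 + (B0 + L * (κ * C) ^ α) * (κ * C)))
      (hEcont.measurable.comp hm).aestronglyMeasurable
    apply ae_of_all
    intro ω
    show ‖E (f t ω)‖ ≤ _
    rw [Real.norm_eq_abs, abs_of_nonneg (hEnn (f t ω))]
    exact hEbd C hC0 _ (hCb ω)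
  have hnormint : ∀ t, 1 ≤ t → Integrable (fun ω => ‖f t ω - fH‖ ^ 2) P := by
    intro t ht
    obtain ⟨hm, C, hC0, hCb⟩ := hfb t ht
    apply Integrable.mono' (integrable_const ((C + ‖fH‖) ^ 2))
      (((hm.sub measurable_const).norm).pow_const 2).aestronglyMeasurable
    apply ae_of_all
    intro ω
    show ‖(‖f t ω - fH‖ ^ 2)‖ ≤ _
    rw [Real.norm_eq_abs, abs_of_nonneg (sq_nonneg _)]
    apply pow_le_pow_left₀ (norm_nonneg _) _ 2
    exact (norm_sub_le _ _).trans (add_le_add_left (hCb ω) _)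
  -- nonnegativity of excess error
  have hr0 : ∀ t, 1 ≤ t → 0 ≤ (∫ ω, E (f t ω) ∂P) - E fH := by
    intro t ht
    have h1 : ∫ ω, E fH ∂P ≤ ∫ ω, E (f t ω) ∂P :=
      integral_mono (integrable_const _) (hEfint t ht) fun ω => hmin _
    rw [integral_const] at h1
    simp only [measure_univ, probReal_univ, ENNReal.toReal_one, smul_eq_mul, one_mul] at h1
    linarith
  have ha0 : ∀ t : ℕ, 0 ≤ ∫ ω, ‖f t ω - fH‖ ^ 2 ∂P :=
    fun t => integral_nonneg fun ω => sq_nonneg _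
  -- the recursion in expectation
  have hrec : ∀ t, 1 ≤ t →
      (∫ ω, ‖f (t + 1) ω - fH‖ ^ 2 ∂P)
        ≤ (∫ ω, ‖f t ω - fH‖ ^ 2 ∂P) - 2 * η t * ((∫ ω, E (f t ω) ∂P) - E fH)
          + η t ^ 2 * (Ac + Bc * ((∫ ω, E (f t ω) ∂P) - E fH)) := by
    intro t ht
    obtain ⟨hm, C, hC0, hCb⟩ := hfb t ht
    set h : H → X × Y → ℝ := fun g z =>
      ‖(g - fH) - (η t * φ' ((z.2 : Y) : ℝ) ⟪g, K z.1⟫) • K z.1‖ ^ 2 with hhdef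
    have hhm : Measurable fun p : H × (X × Y) => h p.1 p.2 := by
      apply Measurable.pow_const
      apply Measurable.norm
      apply Measurable.sub (measurable_fst.sub measurable_const)
      exact (measurable_const.mul (hφ'meas.comp
          ((measurable_subtype_coe.comp (measurable_snd.comp measurable_snd)).prodMk
            (measurable_fst.inner (hKmeas.comp (measurable_fst.comp measurable_snd)))))).smul
        (hKmeas.comp (measurable_fst.comp measurable_snd))
    set D : ℝ := B0 + L * (κ * C) ^ α with hDdef
    have hD0 : 0 ≤ D := add_nonneg hB0nn.le
      (mul_nonneg hL.le (Real.rpow_nonneg (mul_nonneg hκ0 hC0) _))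
    have hhb : ∀ g z, ‖g‖ ≤ C → |h g z| ≤ (C + ‖fH‖ + η t * D * κ) ^ 2 := by
      intro g z hg
      have hnrm : ‖(g - fH) - (η t * φ' ((z.2 : Y) : ℝ) ⟪g, K z.1⟫) • K z.1‖
          ≤ C + ‖fH‖ + η t * D * κ := by
        have h1 : |(⟪g, K z.1⟫ : ℝ)| ≤ κ * C := by
          calc |(⟪g, K z.1⟫ : ℝ)| ≤ ‖g‖ * ‖K z.1‖ := abs_real_inner_le_norm _ _
            _ ≤ C * κ := mul_le_mul hg (hκ _) (norm_nonneg _) hC0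
            _ = κ * C := by ring
        have h2 : |φ' ((z.2 : Y) : ℝ) ⟪g, K z.1⟫| ≤ D := by
          refine (hφ'b _ z.2.2 _).trans ?_
          have := Real.rpow_le_rpow (abs_nonneg _) h1 hα0.le
          rw [hDdef]
          nlinarith
        have h3 : ‖(η t * φ' ((z.2 : Y) : ℝ) ⟪g, K z.1⟫) • K z.1‖ ≤ η t * D * κ := by
          rw [norm_smul, Real.norm_eq_abs, abs_mul, abs_of_pos (hηpos t)]
          have h4 : η t * |φ' ((z.2 : Y) : ℝ) ⟪g, K z.1⟫| ≤ η t * D :=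
            mul_le_mul_of_nonneg_left h2 (hηpos t).le
          apply mul_le_mul h4 (hκ _) (norm_nonneg _)
          exact mul_nonneg (hηpos t).le hD0
        calc ‖(g - fH) - (η t * φ' ((z.2 : Y) : ℝ) ⟪g, K z.1⟫) • K z.1‖
            ≤ ‖g - fH‖ + ‖(η t * φ' ((z.2 : Y) : ℝ) ⟪g, K z.1⟫) • K z.1‖ := norm_sub_le _ _
          _ ≤ (‖g‖ + ‖fH‖) + η t * D * κ := add_le_add (norm_sub_le _ _) h3
          _ ≤ C + ‖fH‖ + η t * D * κ := by linarith
      rw [hhdef, abs_of_nonneg (sq_nonneg _)]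
      exact pow_le_pow_left₀ (norm_nonneg _) hnrm 2
    have hstep1 : (fun ω => ‖f (t + 1) ω - fH‖ ^ 2) = fun ω => h (f t ω) (zs t ω) := by
      funext ω
      rw [hfrec t ht ω, hhdef]
      rw [sub_right_comm]
    have hstep2 := hfub t ht h C ((C + ‖fH‖ + η t * D * κ) ^ 2) hhm hCb hhb
    have hstep3 : ∫ ω, (∫ z : X × Y, h (f t ω) z ∂ρ) ∂P
        ≤ ∫ ω, (‖f t ω - fH‖ ^ 2 - 2 * η t * (E (f t ω) - E fH)
            + η t ^ 2 * (Ac + Bc * (E (f t ω) - E fH))) ∂P := by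
      apply integral_mono_of_nonneg
      · exact ae_of_all _ fun ω => integral_nonneg fun z => sq_nonneg _
      · have hrewr : (fun ω => ‖f t ω - fH‖ ^ 2 - 2 * η t * (E (f t ω) - E fH)
            + η t ^ 2 * (Ac + Bc * (E (f t ω) - E fH)))
            = fun ω => ‖f t ω - fH‖ ^ 2 + ((η t ^ 2 * Bc - 2 * η t) * E (f t ω)
              + (2 * η t * E fH + η t ^ 2 * Ac - η t ^ 2 * Bc * E fH)) := by
          funext ω; ring
        rw [hrewr]
        have hB : Integrable (fun ω => (η t ^ 2 * Bc - 2 * η t) * E (f t ω)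
            + (2 * η t * E fH + η t ^ 2 * Ac - η t ^ 2 * Bc * E fH)) P :=
          ((hEfint t ht).const_mul _).add (integrable_const _)
        exact (hnormint t ht).add hB
      · exact ae_of_all _ fun ω => hkey t (f t ω)
    have hstep4 : ∫ ω, (‖f t ω - fH‖ ^ 2 - 2 * η t * (E (f t ω) - E fH)
          + η t ^ 2 * (Ac + Bc * (E (f t ω) - E fH))) ∂P
        = (∫ ω, ‖f t ω - fH‖ ^ 2 ∂P) - 2 * η t * ((∫ ω, E (f t ω) ∂P) - E fH)
          + η t ^ 2 * (Ac + Bc * ((∫ ω, E (f t ω) ∂P) - E fH)) := by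
      have hrewr : (fun ω => ‖f t ω - fH‖ ^ 2 - 2 * η t * (E (f t ω) - E fH)
          + η t ^ 2 * (Ac + Bc * (E (f t ω) - E fH)))
          = fun ω => ‖f t ω - fH‖ ^ 2 + ((η t ^ 2 * Bc - 2 * η t) * E (f t ω)
            + (2 * η t * E fH + η t ^ 2 * Ac - η t ^ 2 * Bc * E fH)) := by
        funext ω; ring
      have hB1 : Integrable (fun ω => (η t ^ 2 * Bc - 2 * η t) * E (f t ω)) P :=
        (hEfint t ht).const_mul _
      have hB2 : Integrable (fun ω => (η t ^ 2 * Bc - 2 * η t) * E (f t ω)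
          + (2 * η t * E fH + η t ^ 2 * Ac - η t ^ 2 * Bc * E fH)) P :=
        hB1.add (integrable_const _)
      rw [hrewr, integral_add (hnormint t ht) hB2,
        integral_add hB1 (integrable_const _),
        integral_const_mul, integral_const]
      simp only [measure_univ, probReal_univ, ENNReal.toReal_one, smul_eq_mul, one_mul]
      ring
    calc ∫ ω, ‖f (t + 1) ω - fH‖ ^ 2 ∂P
        = ∫ ω, h (f t ω) (zs t ω) ∂P := by rw [hstep1]
      _ = ∫ ω, (∫ z : X × Y, h (f t ω) z ∂ρ) ∂P := hstep2
      _ ≤ _ := hstep3.trans_eq hstep4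
  -- conclude
  exact det_recursion η (fun t => (∫ ω, E (f t ω) ∂P) - E fH)
    (fun t => ∫ ω, ‖f t ω - fH‖ ^ 2 ∂P) Ac Bc hAc0 hBc0 hηpos hr0 ha0 hrec hη0 hdiv
end
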